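/- arXiv:0801.3218 — 4 statements merged into one kernel-verified Lean document; each statement's English description precedes it below -/
import Mathlib

section
/- Let m, n ≥ 3 be natural numbers. Then the maximal real subfields satisfy k_m = k_n if and only if Q(ζ_m) = Q(ζ_n) or both m, n ∈ {3, 4, 6}. -/
/-- `ζ_n = e^{2πi/n}`, a primitive `n`-th root of unity in `ℂ`. -/
noncomputable def zeta (n : ℕ) : ℂ := Complex.exp (2 * Real.pi * Complex.I / n)

/-- The `n`-th cyclotomic field `ℚ(ζ_n)`, as a subfield of `ℂ`. -/
noncomputable def cyclField (n : ℕ) : IntermediateField ℚ ℂ :=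
  IntermediateField.adjoin ℚ {zeta n}

/-- The maximal real subfield `k_n = ℚ(ζ_n + ζ_n⁻¹)` of `ℚ(ζ_n)`. -/
noncomputable def realCyclField (n : ℕ) : IntermediateField ℚ ℂ :=
  IntermediateField.adjoin ℚ {zeta n + (zeta n)⁻¹}


set_option maxHeartbeats 1000000
set_option synthInstance.maxHeartbeats 1000000

open IntermediateField Complex Polynomial Module

lemma zeta_prim {n : ℕ} (hn : n ≠ 0) : IsPrimitiveRoot (zeta n) n :=
  Complex.isPrimitiveRoot_exp n hn

lemma zeta_pow {d a : ℕ} (hd : d ∣ a) (ha : a ≠ 0) (hd0 : d ≠ 0) :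
    (zeta a) ^ (a / d) = zeta d := by
  unfold zeta
  rw [← Complex.exp_nat_mul]
  congr 1
  have : (a : ℂ) ≠ 0 := Nat.cast_ne_zero.2 ha
  have : (d : ℂ) ≠ 0 := Nat.cast_ne_zero.2 hd0
  field_simp
  rw [mul_comm]
  norm_cast
  push_cast
  ring_nf
  exact Nat.mul_div_cancel' hd

lemma zeta_mem (n : ℕ) : zeta n ∈ cyclField n := subset_adjoin _ _ rfl

lemma gen_mem (n : ℕ) : zeta n + (zeta n)⁻¹ ∈ cyclField n :=
  add_mem (zeta_mem n) (inv_mem (zeta_mem n))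

lemma real_le_cycl (n : ℕ) : realCyclField n ≤ cyclField n := by
  rw [realCyclField, adjoin_le_iff]
  rintro x rfl
  exact gen_mem n

lemma cyclField_mono {d a : ℕ} (hd : d ∣ a) (ha : a ≠ 0) (hd0 : d ≠ 0) :
    cyclField d ≤ cyclField a := by
  rw [cyclField, adjoin_le_iff]
  rintro x rfl
  rw [← zeta_pow hd ha hd0]
  exact pow_mem (zeta_mem a) _

lemma finrank_cyclField {n : ℕ} (hn : n ≠ 0) :
    Module.finrank ℚ (cyclField n) = n.totient := by
  set n' : ℕ+ := ⟨n, Nat.pos_of_ne_zero hn⟩ with hn'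
  have hcoe : (n' : ℕ) = n := rfl
  have hprim : IsPrimitiveRoot (zeta n) (n' : ℕ+) := zeta_prim hn
  have hint : IsIntegral ℚ (zeta n) := (hprim.isIntegral n'.pos).tower_top
  have hsub : (IntermediateField.adjoin ℚ {zeta n}).toSubalgebra
      = Algebra.adjoin ℚ {zeta n} :=
    IntermediateField.adjoin_simple_toSubalgebra_of_isAlgebraic hint.isAlgebraic
  haveI := hprim.adjoin_isCyclotomicExtension ℚ
  have h1 : Module.finrank ℚ (Algebra.adjoin ℚ {zeta n}) = n.totient :=
    IsCyclotomicExtension.finrank (K := ℚ) (L := Algebra.adjoin ℚ {zeta n}) (n := n')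
      (Polynomial.cyclotomic.irreducible_rat n'.pos)
  rw [cyclField, ← h1]
  exact (Subalgebra.equivOfEq _ _ hsub).toLinearEquiv.finrank_eq

/-- ℝ as an intermediate field of ℚ/ℂ -/
noncomputable def Rf : IntermediateField ℚ ℂ :=
  Subfield.toIntermediateField Complex.ofRealHom.fieldRange
    (fun q => ⟨(q : ℝ), by simp⟩)

lemma mem_Rf {z : ℂ} : z ∈ Rf ↔ z.im = 0 := by
  constructor
  · rintro ⟨r, rfl⟩; simp
  · intro h; exact ⟨z.re, Complex.ext (by simp) (by simp [h])⟩

lemma zeta_eq (n : ℕ) : zeta n = Complex.exp ((2 * Real.pi / n : ℝ) * Complex.I) := by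
  unfold zeta
  congr 1
  push_cast
  ring

lemma gen_im (n : ℕ) : (zeta n + (zeta n)⁻¹).im = 0 := by
  rw [zeta_eq, ← Complex.exp_neg,
    show -((2 * Real.pi / n : ℝ) * Complex.I) = ((-(2 * Real.pi / n) : ℝ) : ℂ) * Complex.I by
      push_cast; ring]
  rw [Complex.add_im, Complex.exp_ofReal_mul_I_im, Complex.exp_ofReal_mul_I_im,
    Real.sin_neg]
  ring

lemma realCyclField_le_Rf (n : ℕ) : realCyclField n ≤ Rf := by
  rw [realCyclField, adjoin_le_iff]
  rintro x rfl
  exact mem_Rf.2 (gen_im n)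

lemma zeta_not_mem_Rf {n : ℕ} (hn : 3 ≤ n) : zeta n ∉ Rf := by
  rw [mem_Rf, zeta_eq, Complex.exp_ofReal_mul_I_im]
  have h1 : (0 : ℝ) < 2 * Real.pi / n := by
    positivity
  have h2 : 2 * Real.pi / n < Real.pi := by
    rw [div_lt_iff₀ (by positivity)]
    have : (3 : ℝ) ≤ n := by exact_mod_cast hn
    nlinarith [Real.pi_pos]
  exact ne_of_gt (Real.sin_pos_of_pos_of_lt_pi h1 h2)

lemma zeta_ne_zero {n : ℕ} (hn : n ≠ 0) : zeta n ≠ 0 :=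
  (zeta_prim hn).ne_zero hn

lemma zeta_integral {n : ℕ} (hn : n ≠ 0) : IsIntegral ℚ (zeta n) :=
  ((zeta_prim hn).isIntegral (Nat.pos_of_ne_zero hn)).tower_top

lemma relfinrank_real_cycl {n : ℕ} (hn : 3 ≤ n) :
    relfinrank (realCyclField n) (cyclField n) = 2 := by
  have hn0 : n ≠ 0 := by omega
  have hle := real_le_cycl n
  rw [relfinrank_eq_finrank_of_le hle]
  rw [show extendScalars hle = adjoin (realCyclField n) {zeta n} from
    extendScalars_adjoin (S := {zeta n}) hle]
  have hint : IsIntegral (realCyclField n) (zeta n) := (zeta_integral hn0).tower_top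
  rw [IntermediateField.adjoin.finrank hint]
  -- minpoly degree = 2
  set k := realCyclField n
  set s : k := ⟨zeta n + (zeta n)⁻¹, IntermediateField.subset_adjoin ℚ _ rfl⟩ with hs
  set q : Polynomial k := X ^ 2 - C s * X + 1 with hq
  have hqmonic : q.Monic := by
    unfold q
    monicity!
  have hqdeg : q.natDegree = 2 := by unfold q; compute_degree!
  have hqaeval : Polynomial.aeval (zeta n) q = 0 := by
    simp only [hq, map_add, map_sub, map_mul, map_pow, map_one, aeval_X, aeval_C]
    have hs' : (algebraMap k ℂ) s = zeta n + (zeta n)⁻¹ := rfl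
    rw [hs']
    have hz := zeta_ne_zero hn0
    field_simp
    ring
  have hle2 : (minpoly k (zeta n)).natDegree ≤ 2 := by
    have := minpoly.min k (zeta n) hqmonic hqaeval
    calc (minpoly k (zeta n)).natDegree ≤ q.natDegree := natDegree_le_natDegree this
    _ = 2 := hqdeg
  have hge2 : 2 ≤ (minpoly k (zeta n)).natDegree := by
    rw [minpoly.two_le_natDegree_iff hint]
    rintro ⟨⟨y, hy⟩, rfl⟩
    exact zeta_not_mem_Rf hn (realCyclField_le_Rf n hy)
  omega

instance cyclField_fd (n : ℕ) : FiniteDimensional ℚ (cyclField n) := by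
  rcases eq_or_ne n 0 with rfl | hn
  · have : zeta 0 = 1 := by
      unfold zeta; simp
    rw [cyclField, this]
    exact IntermediateField.adjoin.finiteDimensional isIntegral_one
  · exact IntermediateField.adjoin.finiteDimensional (zeta_integral hn)

lemma lcm_div_left {a b : ℕ} (ha : a ≠ 0) (hb : b ≠ 0) :
    Nat.lcm a b / a = b / Nat.gcd a b := by
  rw [Nat.lcm, Nat.mul_div_assoc a (Nat.gcd_dvd_right a b),
    Nat.mul_div_cancel_left _ (Nat.pos_of_ne_zero ha)]

lemma cyclField_sup {a b : ℕ} (ha : a ≠ 0) (hb : b ≠ 0) :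
    cyclField a ⊔ cyclField b = cyclField (Nat.lcm a b) := by
  have hl : Nat.lcm a b ≠ 0 := Nat.lcm_ne_zero ha hb
  apply le_antisymm
  · exact sup_le (cyclField_mono (Nat.dvd_lcm_left a b) hl ha)
      (cyclField_mono (Nat.dvd_lcm_right a b) hl hb)
  · rw [show cyclField (Nat.lcm a b) = IntermediateField.adjoin ℚ {zeta (Nat.lcm a b)} from rfl, adjoin_le_iff]
    rintro x rfl
    have hgcd0 : Nat.gcd a b ≠ 0 := fun h0 => ha (Nat.eq_zero_of_gcd_eq_zero_left h0)
    have hco : Nat.Coprime (Nat.lcm a b / a) (Nat.lcm a b / b) := by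
      rw [lcm_div_left ha hb, Nat.lcm_comm a b, lcm_div_left hb ha, Nat.gcd_comm b a]
      exact Nat.Coprime.symm (Nat.coprime_div_gcd_div_gcd (Nat.pos_of_ne_zero hgcd0))
    obtain ⟨u, v, huv⟩ := Nat.isCoprime_iff_coprime.2 hco
    have hz : zeta (Nat.lcm a b) ≠ 0 := zeta_ne_zero hl
    have key : zeta (Nat.lcm a b) = (zeta a : ℂ) ^ u * (zeta b : ℂ) ^ v := by
      rw [← zeta_pow (Nat.dvd_lcm_left a b) hl ha, ← zeta_pow (Nat.dvd_lcm_right a b) hl hb]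
      rw [← zpow_natCast (zeta (Nat.lcm a b)) (Nat.lcm a b / a),
        ← zpow_natCast (zeta (Nat.lcm a b)) (Nat.lcm a b / b),
        ← zpow_mul, ← zpow_mul, ← zpow_add₀ hz]
      rw [show ((Nat.lcm a b / a : ℕ) : ℤ) * u + ((Nat.lcm a b / b : ℕ) : ℤ) * v = 1 by
        rw [mul_comm, mul_comm ((Nat.lcm a b / b : ℕ) : ℤ)]; exact_mod_cast huv]
      exact (zpow_one _).symm
    rw [key]
    apply mul_mem
    · exact zpow_mem (le_sup_left (a := cyclField a) (b := cyclField b) (zeta_mem a)) u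
    · exact zpow_mem (le_sup_right (a := cyclField a) (b := cyclField b) (zeta_mem b)) v

lemma totient_gcd_lcm {a b : ℕ} (ha : a ≠ 0) (hb : b ≠ 0) :
    Nat.totient (Nat.gcd a b) * Nat.totient (Nat.lcm a b) = Nat.totient a * Nat.totient b := by
  set d := Nat.gcd a b
  set l := Nat.lcm a b
  have hd0 : d ≠ 0 := fun h0 => ha (Nat.eq_zero_of_gcd_eq_zero_left h0)
  have h1 := Nat.totient_gcd_mul_totient_mul a b
  have hab : a * b = d * l := (Nat.gcd_mul_lcm a b).symm
  have h2 := Nat.totient_gcd_mul_totient_mul d l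
  have hdl : d ∣ l := (Nat.gcd_dvd_left a b).trans (Nat.dvd_lcm_left a b)
  rw [Nat.gcd_eq_left hdl] at h2
  have hphid : 0 < Nat.totient d := Nat.totient_pos.2 (Nat.pos_of_ne_zero hd0)
  have h3 : Nat.totient (d * l) = Nat.totient l * d :=
    Nat.eq_of_mul_eq_mul_left hphid (by linarith [h2])
  rw [hab, h3] at h1
  have := Nat.eq_of_mul_eq_mul_right (Nat.pos_of_ne_zero hd0)
    (show Nat.totient d * Nat.totient l * d = Nat.totient a * Nat.totient b * d by
      linarith [h1])
  linarith [this]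

lemma fd_of_le {E F : IntermediateField ℚ ℂ} (h : E ≤ F) [FiniteDimensional ℚ F] :
    FiniteDimensional ℚ E :=
  FiniteDimensional.of_injective (IntermediateField.inclusion h).toLinearMap
    (IntermediateField.inclusion_injective h)

lemma finrank_eq_mul {E F : IntermediateField ℚ ℂ} (h : E ≤ F) :
    Module.finrank ℚ F = Module.finrank ℚ E * relfinrank E F := by
  rw [← relfinrank_bot_left F, ← relfinrank_bot_left E,
    relfinrank_mul_relfinrank bot_le h]

lemma cyclField_inf {a b : ℕ} (ha : a ≠ 0) (hb : b ≠ 0) :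
    cyclField a ⊓ cyclField b = cyclField (Nat.gcd a b) := by
  have hd0 : Nat.gcd a b ≠ 0 := fun h0 => ha (Nat.eq_zero_of_gcd_eq_zero_left h0)
  have hl0 : Nat.lcm a b ≠ 0 := Nat.lcm_ne_zero ha hb
  haveI := cyclField_fd a
  haveI := cyclField_fd b
  haveI := cyclField_fd (Nat.lcm a b)
  set M := cyclField a ⊓ cyclField b with hM
  have hMa : M ≤ cyclField a := inf_le_left
  have hMb : M ≤ cyclField b := inf_le_right
  haveI : FiniteDimensional ℚ M := fd_of_le hMa
  have hled : cyclField (Nat.gcd a b) ≤ M :=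
    le_inf (cyclField_mono (Nat.gcd_dvd_left a b) ha hd0)
      (cyclField_mono (Nat.gcd_dvd_right a b) hb hd0)
  -- key inequality: finrank ℚ M ≤ φ(gcd a b)
  have hMsup : M ≤ cyclField a ⊔ cyclField b := le_sup_of_le_left hMa
  have hsup_le : relfinrank M (cyclField a ⊔ cyclField b) ≤
      relfinrank M (cyclField a) * relfinrank M (cyclField b) := by
    rw [relfinrank_eq_finrank_of_le hMsup,
      relfinrank_eq_finrank_of_le hMa, relfinrank_eq_finrank_of_le hMb,
      ← IntermediateField.extendScalars_sup hMa hMb]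
    exact IntermediateField.finrank_sup_le (extendScalars hMa) (extendScalars hMb)
  have e1 : Module.finrank ℚ ↥(cyclField a ⊔ cyclField b)
      = Module.finrank ℚ M * relfinrank M (cyclField a ⊔ cyclField b) :=
    finrank_eq_mul hMsup
  have e2 : Module.finrank ℚ (cyclField a) = Module.finrank ℚ M * relfinrank M (cyclField a) :=
    finrank_eq_mul hMa
  have e3 : Module.finrank ℚ (cyclField b) = Module.finrank ℚ M * relfinrank M (cyclField b) :=
    finrank_eq_mul hMb
  have hM0 : 0 < Module.finrank ℚ M := Module.finrank_pos
  have hltot : 0 < (Nat.lcm a b).totient := Nat.totient_pos.2 (Nat.pos_of_ne_zero hl0)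
  have hφl : (Nat.lcm a b).totient
      = Module.finrank ℚ M * relfinrank M (cyclField a ⊔ cyclField b) := by
    rw [← finrank_cyclField hl0, ← cyclField_sup ha hb]; exact e1
  have hφa : a.totient = Module.finrank ℚ M * relfinrank M (cyclField a) := by
    rw [← finrank_cyclField ha]; exact e2
  have hφb : b.totient = Module.finrank ℚ M * relfinrank M (cyclField b) := by
    rw [← finrank_cyclField hb]; exact e3
  have hineq : Module.finrank ℚ M * (Nat.lcm a b).totient
      ≤ (Nat.gcd a b).totient * (Nat.lcm a b).totient := by
    calc Module.finrank ℚ M * (Nat.lcm a b).totient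
        = Module.finrank ℚ M * (Module.finrank ℚ M
            * relfinrank M (cyclField a ⊔ cyclField b)) := by rw [hφl]
      _ = Module.finrank ℚ M * Module.finrank ℚ M
            * relfinrank M (cyclField a ⊔ cyclField b) := by ring
      _ ≤ Module.finrank ℚ M * Module.finrank ℚ M
            * (relfinrank M (cyclField a) * relfinrank M (cyclField b)) :=
          Nat.mul_le_mul_left _ hsup_le
      _ = (Module.finrank ℚ M * relfinrank M (cyclField a))
            * (Module.finrank ℚ M * relfinrank M (cyclField b)) := by ring
      _ = a.totient * b.totient := by rw [← hφa, ← hφb]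
      _ = (Nat.gcd a b).totient * (Nat.lcm a b).totient := (totient_gcd_lcm ha hb).symm
  have hkey : Module.finrank ℚ M ≤ (Nat.gcd a b).totient :=
    Nat.le_of_mul_le_mul_right hineq hltot
  exact ((eq_of_le_of_finrank_le hled
    (by rw [finrank_cyclField hd0]; exact hkey)).symm : M = cyclField (Nat.gcd a b))

lemma totient_eq_two {n : ℕ} (hn : 3 ≤ n) (h : n.totient = 2) : n = 3 ∨ n = 4 ∨ n = 6 := by
  have hn0 : n ≠ 0 := by omega
  have hdvd : n ∣ 12 := by
    rw [← Nat.factorization_le_iff_dvd hn0 (by norm_num), Finsupp.le_def]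
    intro p
    by_cases hp : p.Prime
    · rw [← Nat.Prime.pow_dvd_iff_le_factorization hp (by norm_num)]
      set k := n.factorization p with hk
      rcases Nat.eq_zero_or_pos k with hk0 | hkpos
      · simp [hk0]
      have hpk : p ^ k ∣ n := Nat.ordProj_dvd n p
      have h2 : Nat.totient (p ^ k) ∣ 2 := h ▸ Nat.totient_dvd_of_dvd hpk
      have htot : Nat.totient (p ^ k) = p ^ (k - 1) * (p - 1) :=
        Nat.totient_prime_pow hp hkpos
      have hle : p ^ (k - 1) * (p - 1) ≤ 2 := Nat.le_of_dvd (by norm_num) (htot ▸ h2)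
      have hp2 : 2 ≤ p := hp.two_le
      have hpow1 : 1 ≤ p ^ (k - 1) := Nat.one_le_pow _ _ (by omega)
      have hple : p ≤ 3 := by
        have : p - 1 ≤ p ^ (k - 1) * (p - 1) := Nat.le_mul_of_pos_left _ (by omega)
        omega
      interval_cases p
      · have hk2 : k ≤ 2 := by
          by_contra hgt
          have h4 : 2 ^ 2 ≤ 2 ^ (k - 1) := Nat.pow_le_pow_right (by norm_num) (by omega)
          omega
        calc (2:ℕ) ^ k ∣ 2 ^ 2 := pow_dvd_pow 2 hk2
        _ ∣ 12 := by norm_num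
      · have hk1 : k ≤ 1 := by
          by_contra hgt
          have h4 : 3 ^ 1 ≤ 3 ^ (k - 1) := Nat.pow_le_pow_right (by norm_num) (by omega)
          omega
        calc (3:ℕ) ^ k ∣ 3 ^ 1 := pow_dvd_pow 3 hk1
        _ ∣ 12 := by norm_num
    · simp [Nat.factorization_eq_zero_of_not_prime _ hp]
  have h12 : n ≤ 12 := Nat.le_of_dvd (by norm_num) hdvd
  interval_cases n <;> revert h <;> decide

lemma mul_two_aux {a b : ℕ} (h : a * b = 2) (hb : b ≠ 1) : a = 1 := by
  have ha : a ≤ 2 := Nat.le_of_dvd (by norm_num) ⟨b, h.symm⟩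
  interval_cases a <;> omega


lemma finrank_real_mul {n : ℕ} (hn : 3 ≤ n) :
    Module.finrank ℚ (realCyclField n) * 2 = n.totient := by
  rw [← finrank_cyclField (by omega : n ≠ 0), finrank_eq_mul (real_le_cycl n),
    relfinrank_real_cycl hn]

lemma realCyclField_eq_bot_iff {n : ℕ} (hn : 3 ≤ n) :
    realCyclField n = ⊥ ↔ n.totient = 2 := by
  rw [← IntermediateField.finrank_eq_one_iff]
  have := finrank_real_mul hn
  omega

lemma real_eq_inf {n : ℕ} (hn : 3 ≤ n) : realCyclField n = cyclField n ⊓ Rf := by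
  haveI := cyclField_fd n
  have hkM : realCyclField n ≤ cyclField n ⊓ Rf :=
    le_inf (real_le_cycl n) (realCyclField_le_Rf n)
  have hMK : cyclField n ⊓ Rf ≤ cyclField n := inf_le_left
  haveI : FiniteDimensional ℚ (cyclField n ⊓ Rf : IntermediateField ℚ ℂ) := fd_of_le hMK
  haveI : FiniteDimensional ℚ (realCyclField n) := fd_of_le (real_le_cycl n)
  have h2 : relfinrank (realCyclField n) (cyclField n ⊓ Rf)
      * relfinrank (cyclField n ⊓ Rf) (cyclField n) = 2 := by
    rw [relfinrank_mul_relfinrank hkM hMK, relfinrank_real_cycl hn]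
  have hMne : relfinrank (cyclField n ⊓ Rf) (cyclField n) ≠ 1 := by
    intro h1
    have heq : (cyclField n ⊓ Rf : IntermediateField ℚ ℂ) = cyclField n :=
      eq_of_le_of_finrank_le hMK (by rw [finrank_eq_mul hMK, h1, mul_one])
    have hzm : zeta n ∈ (cyclField n ⊓ Rf : IntermediateField ℚ ℂ) := by
      rw [heq]; exact zeta_mem n
    exact zeta_not_mem_Rf hn ((inf_le_right : cyclField n ⊓ Rf ≤ Rf) hzm)
  have hk1 : relfinrank (realCyclField n) (cyclField n ⊓ Rf) = 1 :=
    mul_two_aux h2 hMne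
  exact eq_of_le_of_finrank_le hkM (by rw [finrank_eq_mul hkM, hk1, mul_one])

/-- For `m, n ≥ 3`: `k_m = k_n` iff `ℚ(ζ_m) = ℚ(ζ_n)` or `m, n ∈ {3,4,6}`. -/
theorem realCyclField_eq_iff (m n : ℕ) (hm : 3 ≤ m) (hn : 3 ≤ n) :
    realCyclField m = realCyclField n ↔
      (cyclField m = cyclField n ∨
        (m ∈ ({3, 4, 6} : Set ℕ) ∧ n ∈ ({3, 4, 6} : Set ℕ))) := by
  have hm0 : m ≠ 0 := by omega
  have hn0 : n ≠ 0 := by omega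
  constructor
  · intro hreal
    by_cases hb : realCyclField m = ⊥
    · right
      have h1 : m = 3 ∨ m = 4 ∨ m = 6 :=
        totient_eq_two hm ((realCyclField_eq_bot_iff hm).1 hb)
      have h2 : n = 3 ∨ n = 4 ∨ n = 6 :=
        totient_eq_two hn ((realCyclField_eq_bot_iff hn).1 (hreal ▸ hb))
      constructor <;> simp only [Set.mem_insert_iff, Set.mem_singleton_iff] <;> tauto
    · left
      haveI := cyclField_fd m
      haveI := cyclField_fd n
      have hfm := finrank_real_mul hm
      have hfn := finrank_real_mul hn
      rw [← hreal] at hfn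
      -- φ m = φ n
      have hphi : m.totient = n.totient := by omega
      have hf2 : 2 ≤ Module.finrank ℚ (realCyclField m) := by
        haveI : FiniteDimensional ℚ (realCyclField m) := fd_of_le (real_le_cycl m)
        have h1 : Module.finrank ℚ (realCyclField m) ≠ 1 := by
          rw [Ne, IntermediateField.finrank_eq_one_iff]; exact hb
        have h0 : 0 < Module.finrank ℚ (realCyclField m) := Module.finrank_pos
        omega
      have hkM : realCyclField m ≤ cyclField m ⊓ cyclField n :=
        le_inf (real_le_cycl m) (hreal ▸ real_le_cycl n)
      have hMK : cyclField m ⊓ cyclField n ≤ cyclField m := inf_le_left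
      haveI : FiniteDimensional ℚ (cyclField m ⊓ cyclField n : IntermediateField ℚ ℂ) :=
        fd_of_le hMK
      haveI : FiniteDimensional ℚ (realCyclField m) := fd_of_le (real_le_cycl m)
      have h2 : relfinrank (realCyclField m) (cyclField m ⊓ cyclField n)
          * relfinrank (cyclField m ⊓ cyclField n) (cyclField m) = 2 := by
        rw [relfinrank_mul_relfinrank hkM hMK, relfinrank_real_cycl hm]
      by_cases hcase : relfinrank (cyclField m ⊓ cyclField n) (cyclField m) = 1
      · -- M = cyclField m, so cyclField m ≤ cyclField n, equal by finrank
        have heq : (cyclField m ⊓ cyclField n : IntermediateField ℚ ℂ) = cyclField m :=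
          eq_of_le_of_finrank_le hMK (by rw [finrank_eq_mul hMK, hcase, mul_one])
        have hle : cyclField m ≤ cyclField n := by
          rw [← heq]; exact inf_le_right
        exact eq_of_le_of_finrank_le hle
          (by rw [finrank_cyclField hm0, finrank_cyclField hn0, hphi]) |>.symm ▸ rfl
      · -- realCyclField m = M = cyclField gcd, contradiction
        exfalso
        have hk1 : relfinrank (realCyclField m) (cyclField m ⊓ cyclField n) = 1 :=
          mul_two_aux h2 hcase
        have heq : realCyclField m = cyclField m ⊓ cyclField n :=
          eq_of_le_of_finrank_le hkM (by rw [finrank_eq_mul hkM, hk1, mul_one])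
        rw [cyclField_inf hm0 hn0] at heq
        have hgcd3 : 3 ≤ Nat.gcd m n := by
          by_contra hlt
          have hg0 : Nat.gcd m n ≠ 0 := fun h0 => hm0 (Nat.eq_zero_of_gcd_eq_zero_left h0)
          have hfg : Module.finrank ℚ (cyclField (Nat.gcd m n)) = (Nat.gcd m n).totient :=
            finrank_cyclField hg0
          rw [← heq] at hfg
          have : (Nat.gcd m n).totient ≤ 1 := by
            interval_cases h : Nat.gcd m n <;> simp_all <;> decide
          omega
        have hzm : zeta (Nat.gcd m n) ∈ realCyclField m := by
          rw [heq]; exact zeta_mem (Nat.gcd m n)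
        exact zeta_not_mem_Rf hgcd3 (realCyclField_le_Rf m hzm)
  · rintro (hcyc | ⟨hm3, hn3⟩)
    · rw [real_eq_inf hm, real_eq_inf hn, hcyc]
    · simp only [Set.mem_insert_iff, Set.mem_singleton_iff] at hm3 hn3
      have h1 : realCyclField m = ⊥ := by
        rw [realCyclField_eq_bot_iff hm]
        rcases hm3 with rfl | rfl | rfl <;> decide
      have h2 : realCyclField n = ⊥ := by
        rw [realCyclField_eq_bot_iff hn]
        rcases hn3 with rfl | rfl | rfl <;> decide
      rw [h1, h2]
end

section
/- For a natural number n with n ≢ 2 (mod 4), φ(n)/2 is a prime number if and only if n ∈ {8, 9, 12} or n = 2p + 1 for some Sophie Germain prime p (a prime p such that 2p + 1 is also prime). -/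
private lemma aux_one_odd_prime {n q : ℕ} (hq : Nat.Prime q) (hφ : Nat.totient n = 2 * q)
    {p r : ℕ} (hp : p.Prime) (hr : r.Prime) (hp2 : p ≠ 2) (hr2 : r ≠ 2)
    (hpn : p ∣ n) (hrn : r ∣ n) : p = r := by
  by_contra hne
  have hco : Nat.Coprime p r := (Nat.coprime_primes hp hr).mpr hne
  have hdvd : p * r ∣ n := hco.mul_dvd_of_dvd_of_dvd hpn hrn
  have h1 : Nat.totient (p * r) ∣ 2 * q := hφ ▸ Nat.totient_dvd_of_dvd hdvd
  rw [Nat.totient_mul hco, Nat.totient_prime hp, Nat.totient_prime hr] at h1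
  obtain ⟨s, hs⟩ := hp.odd_of_ne_two hp2
  obtain ⟨t, ht⟩ := hr.odd_of_ne_two hr2
  have hp3 : 3 ≤ p := hp.two_le.lt_of_ne (Ne.symm hp2)
  have hr3 : 3 ≤ r := hr.two_le.lt_of_ne (Ne.symm hr2)
  have hps : p - 1 = 2 * s := by omega
  have hrt : r - 1 = 2 * t := by omega
  rw [hps, hrt] at h1
  have h2 : 2 * (s * t) ∣ q := by
    have h3 : 2 * (2 * (s * t)) ∣ 2 * q := by
      refine dvd_trans (dvd_of_eq ?_) h1; ring
    exact (mul_dvd_mul_iff_left (by norm_num : (2:ℕ) ≠ 0)).mp h3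
  rcases hq.eq_one_or_self_of_dvd _ h2 with h3 | h3
  · omega
  · have hq2 : q = 2 := by
      rcases hq.eq_one_or_self_of_dvd 2 ⟨s * t, h3.symm⟩ with h | h <;> omega
    have hst : s * t = 1 := by omega
    have hs1 : s ≤ 1 := by nlinarith
    have ht1 : t ≤ 1 := by nlinarith
    omega

/-- For a natural number `n ≢ 2 (mod 4)`: `φ(n)/2` is prime iff `n ∈ {8, 9, 12}` or
`n = 2p + 1` for a Sophie Germain prime `p` (a prime `p` with `2p + 1` prime). -/
theorem totient_div_two_prime_iff (n : ℕ) (hn4 : n % 4 ≠ 2) :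
    Nat.Prime (Nat.totient n / 2) ↔
      (n = 8 ∨ n = 9 ∨ n = 12 ∨
        ∃ p : ℕ, Nat.Prime p ∧ Nat.Prime (2 * p + 1) ∧ n = 2 * p + 1) := by
  constructor
  · intro h
    rcases Nat.lt_or_ge n 3 with h3 | h3
    · interval_cases n <;> exact absurd h (by decide)
    have hev : Even (Nat.totient n) := Nat.totient_even h3
    obtain ⟨q, hq, hφ⟩ : ∃ q, Nat.Prime q ∧ Nat.totient n = 2 * q := by
      refine ⟨Nat.totient n / 2, h, ?_⟩
      obtain ⟨r, hr⟩ := hev; omega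
    have hq2 : 2 ≤ q := hq.two_le
    have hn0 : n ≠ 0 := by omega
    obtain ⟨a, m, hnm, hmodd⟩ : ∃ a m, 2 ^ a * m = n ∧ ¬ 2 ∣ m :=
      ⟨n.factorization 2, ordCompl[2] n, Nat.ordProj_mul_ordCompl_eq_self n 2,
        Nat.not_dvd_ordCompl Nat.prime_two hn0⟩
    have hm0 : m ≠ 0 := by rintro rfl; simp at hnm; omega
    by_cases hm1 : m = 1
    · -- n = 2 ^ a
      subst hm1
      rw [mul_one] at hnm
      have ha2 : 2 ≤ a := by
        by_contra hc
        interval_cases a <;> omega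
      have hφ2 : Nat.totient n = 2 ^ (a - 1) := by
        rw [← hnm, Nat.totient_prime_pow Nat.prime_two (by omega)]; simp
      have hh : 2 ^ (a - 1) = 2 * q := hφ2.symm.trans hφ
      rw [show a - 1 = (a - 2) + 1 by omega, pow_succ'] at hh
      have hkey : 2 ^ (a - 2) = q := by omega
      have hqd : q ∣ 2 ^ (a - 2) := hkey ▸ dvd_rfl
      have hq2' : q = 2 :=
        (Nat.prime_dvd_prime_iff_eq hq Nat.prime_two).mp (hq.dvd_of_dvd_pow hqd)
      have hkey2 : 2 ^ (a - 2) = 2 ^ 1 := by rw [hkey, hq2', pow_one]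
      have ha3 : a - 2 = 1 := Nat.pow_right_injective (le_refl 2) hkey2
      left; rw [← hnm, show a = 3 by omega]; norm_num
    · obtain ⟨p, hp, hpm⟩ : ∃ p, Nat.Prime p ∧ p ∣ m :=
        ⟨m.minFac, Nat.minFac_prime hm1, Nat.minFac_dvd m⟩
      have hpne2 : p ≠ 2 := fun hc => hmodd (hc ▸ hpm)
      have hmn : m ∣ n := Dvd.intro_left _ hnm
      have huniq : ∀ {d : ℕ}, d.Prime → d ∣ m → d = p := by
        intro d hd hdm
        have hd2 : d ≠ 2 := fun hc => hmodd (hc ▸ hdm)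
        exact aux_one_odd_prime hq hφ hd hp hd2 hpne2 (hdm.trans hmn) (hpm.trans hmn)
      obtain ⟨b, hmp⟩ : ∃ b, m = p ^ b :=
        ⟨_, Nat.eq_prime_pow_of_unique_prime_dvd hm0 huniq⟩
      have hb1 : 1 ≤ b := by
        rcases Nat.eq_zero_or_pos b with h0 | hpos
        · rw [h0, pow_zero] at hmp; omega
        · exact hpos
      subst hmp
      have hco : Nat.Coprime (2 ^ a) (p ^ b) :=
        Nat.Coprime.pow a b ((Nat.coprime_primes Nat.prime_two hp).mpr (Ne.symm hpne2))
      have hp3 : 3 ≤ p := hp.two_le.lt_of_ne (Ne.symm hpne2)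
      obtain ⟨s, hs⟩ := hp.odd_of_ne_two hpne2
      have hφn : 2 * q = Nat.totient (2 ^ a) * (p ^ (b - 1) * (p - 1)) := by
        rw [← hφ, ← hnm, Nat.totient_mul hco, Nat.totient_prime_pow hp (by omega)]
      match a, hnm with
      | 0, hnm =>
        simp only [pow_zero, Nat.totient_one, one_mul] at hφn hnm
        match b, hb1, hφn with
        | 1, _, hφn =>
          rw [pow_one] at hnm
          simp only [Nat.sub_self, pow_zero, one_mul] at hφn
          right; right; right
          refine ⟨q, hq, ?_, by omega⟩
          rw [show 2 * q + 1 = p by omega]; exact hp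
        | (b' + 2), _, hφn =>
          rw [show b' + 2 - 1 = b' + 1 from rfl] at hφn
          have hpdvd : p ∣ 2 * q := by
            rw [hφn]; exact Dvd.dvd.mul_right (dvd_pow_self p (by omega)) _
          have hpq : p ∣ q := Nat.Coprime.dvd_of_dvd_mul_left
            ((Nat.coprime_primes hp Nat.prime_two).mpr hpne2) hpdvd
          have hpq' : p = q := (Nat.prime_dvd_prime_iff_eq hp hq).mp hpq
          subst hpq'
          rw [pow_succ', mul_assoc] at hφn
          have h2 : p ^ b' * (p - 1) = 2 :=
            Nat.eq_of_mul_eq_mul_left hp.pos (hφn.symm.trans (mul_comm 2 p))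
          have hb0 : 1 ≤ p ^ b' := Nat.one_le_iff_ne_zero.mpr (pow_ne_zero b' (by omega))
          have hple : p - 1 ≤ 2 := by nlinarith
          have hpe : p = 3 := by omega
          rw [hpe] at h2
          have hb'0 : b' = 0 := by
            by_contra hb'
            obtain ⟨c, hc⟩ := dvd_pow_self 3 hb'
            rw [hc] at h2; omega
          right; left
          rw [← hnm, hpe, hb'0]; norm_num
      | 1, hnm =>
        exfalso
        rw [pow_one] at hnm
        have hodd : p ^ b % 2 = 1 := Nat.odd_iff.mp (hp.odd_of_ne_two hpne2).pow
        omega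
      | 2, hnm =>
        have ht4 : Nat.totient (2 ^ 2) = 2 := by decide
        rw [ht4] at hφn
        have hkey : p ^ (b - 1) * (p - 1) = q := by omega
        match b, hb1, hkey with
        | 1, _, hkey =>
          simp only [Nat.sub_self, pow_zero, one_mul] at hkey
          have hqe : q = 2 := by
            rcases hq.eq_one_or_self_of_dvd 2 ⟨s, by omega⟩ with hh | hh <;> omega
          have hpe : p = 3 := by omega
          right; right; left
          rw [← hnm, hpe]; norm_num
        | (b' + 2), _, hkey =>
          exfalso
          rw [show b' + 2 - 1 = b' + 1 from rfl] at hkey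
          have hpq : p ∣ q := by
            rw [← hkey]; exact Dvd.dvd.mul_right (dvd_pow_self p (by omega)) _
          have hpq' : p = q := (Nat.prime_dvd_prime_iff_eq hp hq).mp hpq
          subst hpq'
          have h1 : p ≤ p ^ (b' + 1) := Nat.le_self_pow (by omega) p
          have h2 : p * 2 ≤ p ^ (b' + 1) * (p - 1) := Nat.mul_le_mul h1 (by omega)
          omega
      | (a' + 3), hnm =>
        exfalso
        have ht : Nat.totient (2 ^ (a' + 3)) = 2 ^ (a' + 2) := by
          rw [Nat.totient_prime_pow Nat.prime_two (by omega)]; simp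
        rw [ht, show a' + 2 = a' + 1 + 1 from rfl, pow_succ] at hφn
        -- 2*q = 2^(a'+1) * 2 * X
        obtain ⟨k, hk, hk2⟩ : ∃ k, 2 * q = 4 * k ∧ 2 ≤ k := by
          refine ⟨2 ^ a' * (p ^ (b - 1) * (p - 1)), ?_, ?_⟩
          · rw [hφn, show a' + 1 = a' + 1 from rfl, pow_succ]; ring
          · have h1 : 1 ≤ 2 ^ a' := Nat.one_le_two_pow
            have h2 : 1 ≤ p ^ (b - 1) := Nat.one_le_iff_ne_zero.mpr (pow_ne_zero _ (by omega))
            have h3 : 1 * 2 ≤ p ^ (b - 1) * (p - 1) := Nat.mul_le_mul h2 (by omega)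
            calc 2 = 1 * 2 := by norm_num
              _ ≤ 2 ^ a' * (p ^ (b - 1) * (p - 1)) := Nat.mul_le_mul h1 (by omega)
        have hqe : q = 2 := by
          rcases hq.eq_one_or_self_of_dvd 2 ⟨k, by omega⟩ with hh | hh <;> omega
        omega
  · rintro (rfl | rfl | rfl | ⟨p, hp, hp2, rfl⟩)
    · decide
    · decide
    · decide
    · rw [Nat.totient_prime hp2]
      have h : (2 * p + 1 - 1) / 2 = p := by omega
      rwa [h]
end

section
/- Let m, n ≥ 3 and let Λ ⊆ ℂ be a set satisfying property (Hom) with respect to K_n: for every finite subset F of the n-th cyclotomic field Q(ζ_n), some homothetic image of F is contained in Λ. Then if the maximal real subfield k_m is contained in k_n, Λ contains an affinely regular m-gon. -/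
/-- `Ψ : ℂ → ℂ` is a non-singular affine transformation of the plane. -/
def IsNSAffine (Ψ : ℂ → ℂ) : Prop :=
  ∃ (A : ℂ →ₗ[ℝ] ℂ) (t : ℂ), Function.Bijective A ∧ ∀ z : ℂ, Ψ z = A z + t

/-- There is an affinely regular `m`-gon with all vertices in `Λ`. -/
def HasAffRegularGon (m : ℕ) (Λ : Set ℂ) : Prop :=
  ∃ Ψ : ℂ → ℂ, IsNSAffine Ψ ∧ ∀ j : Fin m, Ψ ((zeta m) ^ (j : ℕ)) ∈ Λ

/-! ### Auxiliary lemmas -/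

lemma zeta_eq_s15 (m : ℕ) (hm : 3 ≤ m) :
    zeta m = (Real.cos (2 * Real.pi / m) : ℂ) + (Real.sin (2 * Real.pi / m) : ℂ) * Complex.I := by
  have hm0 : (m : ℂ) ≠ 0 := by exact_mod_cast (by omega : m ≠ 0)
  rw [zeta, show (2 * (Real.pi:ℂ) * Complex.I / m) = ((2 * Real.pi / m : ℂ)) * Complex.I by
    field_simp]
  rw [show ((2 * Real.pi / m : ℂ)) = ((2 * Real.pi / m : ℝ) : ℂ) by push_cast; ring]
  rw [Complex.exp_mul_I, Complex.ofReal_cos, Complex.ofReal_sin]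

lemma theta_mem (m : ℕ) (hm : 3 ≤ m) :
    0 < 2 * Real.pi / m ∧ 2 * Real.pi / m < Real.pi := by
  have hπ := Real.pi_pos
  have hm0 : (0:ℝ) < m := by exact_mod_cast (by omega : 0 < m)
  constructor
  · positivity
  · rw [div_lt_iff₀ hm0]
    nlinarith [show (3:ℝ) ≤ m from by exact_mod_cast hm]

lemma sin_theta_pos (m : ℕ) (hm : 3 ≤ m) : 0 < Real.sin (2 * Real.pi / m) :=
  Real.sin_pos_of_pos_of_lt_pi (theta_mem m hm).1 (theta_mem m hm).2

lemma zeta_inv_eq (m : ℕ) (hm : 3 ≤ m) :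
    (zeta m)⁻¹ =
      (Real.cos (2 * Real.pi / m) : ℂ) - (Real.sin (2 * Real.pi / m) : ℂ) * Complex.I := by
  have hm0 : (m : ℂ) ≠ 0 := by exact_mod_cast (by omega : m ≠ 0)
  rw [zeta, ← Complex.exp_neg,
    show -(2 * (Real.pi:ℂ) * Complex.I / m) = ((-(2 * Real.pi / m) : ℝ) : ℂ) * Complex.I by
      push_cast; field_simp]
  rw [Complex.exp_mul_I, Complex.ofReal_cos, Complex.ofReal_sin]
  push_cast
  rw [Complex.cos_neg, Complex.sin_neg]
  ring

lemma two_mem' (K : IntermediateField ℚ ℂ) : (2:ℂ) ∈ K := by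
  have : (1:ℂ) + 1 ∈ K := add_mem (one_mem K) (one_mem K)
  norm_num at this
  norm_num

lemma rec_add (z w : ℂ) (h : z * w = 1) (j : ℕ) :
    z ^ (j+2) + w ^ (j+2) = (z + w) * (z ^ (j+1) + w ^ (j+1)) - (z ^ j + w ^ j) := by
  linear_combination (-(z^j) - w^j) * h

lemma rec_sub (z w : ℂ) (h : z * w = 1) (j : ℕ) :
    z ^ (j+2) - w ^ (j+2) = (z + w) * (z ^ (j+1) - w ^ (j+1)) - (z ^ j - w ^ j) := by
  linear_combination (-(z^j) + w^j) * h

lemma div_ofReal_im' (z : ℂ) (s : ℝ) (hs : s ≠ 0) : (z / (s:ℂ)).im = z.im / s := by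
  rw [div_eq_mul_inv, ← Complex.ofReal_inv]
  simp only [Complex.mul_im, Complex.ofReal_re, Complex.ofReal_im, mul_zero, zero_add,
    div_eq_mul_inv]

/-- The real-linear map `z ↦ lam * (z.re + z.im * γ)`. -/
noncomputable def Lmap (lam : ℝ) (γ : ℂ) : ℂ →ₗ[ℝ] ℂ where
  toFun := fun z => (lam : ℂ) * ((z.re : ℂ) + (z.im : ℂ) * γ)
  map_add' := by
    intro a b
    simp only [Complex.add_re, Complex.add_im]
    push_cast
    ring
  map_smul' := by
    intro r a
    simp only [RingHom.id_apply, Complex.real_smul, Complex.mul_re, Complex.mul_im,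
      Complex.ofReal_re, Complex.ofReal_im]
    push_cast
    ring

lemma Lmap_apply (lam : ℝ) (γ : ℂ) (z : ℂ) :
    Lmap lam γ z = (lam : ℂ) * ((z.re : ℂ) + (z.im : ℂ) * γ) := rfl

lemma Lmap_injective (lam : ℝ) (γ : ℂ) (hlam : lam ≠ 0) (hγ : γ.im ≠ 0) :
    Function.Injective (Lmap lam γ) := by
  intro a b hab
  have h0 : Lmap lam γ (a - b) = 0 := by rw [map_sub, hab, sub_self]
  set z := a - b with hz
  have hlam0 : (lam : ℂ) ≠ 0 := by exact_mod_cast hlam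
  have h2 : ((z.re : ℂ) + (z.im : ℂ) * γ) = 0 := by
    rcases mul_eq_zero.mp h0 with h | h
    · exact absurd h hlam0
    · exact h
  have h3 : ((z.re : ℂ) + (z.im : ℂ) * γ).im = 0 := by rw [h2]; rfl
  simp only [Complex.add_im, Complex.ofReal_im, Complex.mul_im, Complex.ofReal_re,
    zero_mul, add_zero, zero_add] at h3
  have him : z.im = 0 := by
    rcases mul_eq_zero.mp h3 with h | h
    · exact h
    · exact absurd h hγ
  have h4 : ((z.re : ℂ) + (z.im : ℂ) * γ).re = 0 := by rw [h2]; rfl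
  simp only [Complex.add_re, Complex.ofReal_re, Complex.mul_re, Complex.ofReal_im,
    him, zero_mul, mul_zero, sub_zero, add_zero] at h4
  have hzz : z = 0 := Complex.ext h4 him
  exact sub_eq_zero.mp (hz ▸ hzz)

/-- Let `m, n ≥ 3` and let `Λ ⊆ ℂ` satisfy property (Hom) w.r.t. `K_n`: every finite
subset of `ℚ(ζ_n)` has a homothetic image (`z ↦ λz + t`, `λ > 0` real) inside `Λ`.
If `k_m ⊆ k_n`, then `Λ` contains an affinely regular `m`-gon. -/
theorem hasAffRegularGon_of_hom (m n : ℕ) (hm : 3 ≤ m) (hn : 3 ≤ n) (Λ : Set ℂ)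
    (hhom : ∀ F : Finset ℂ, (F : Set ℂ) ⊆ (cyclField n : Set ℂ) →
      ∃ (lam : ℝ) (t : ℂ), 0 < lam ∧ ∀ z ∈ F, (lam : ℂ) * z + t ∈ Λ)
    (hk : realCyclField m ≤ realCyclField n) :
    HasAffRegularGon m Λ := by
  set K := cyclField n with hK
  set ζ := zeta m with hζdef
  set η := zeta n with hηdef
  set s : ℝ := Real.sin (2 * Real.pi / m) with hsdef
  have hs : 0 < s := sin_theta_pos m hm
  have hsC : (s : ℂ) ≠ 0 := by exact_mod_cast hs.ne'
  have hζ0 : ζ ≠ 0 := Complex.exp_ne_zero _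
  have hζinv : ζ * ζ⁻¹ = 1 := mul_inv_cancel₀ hζ0
  -- ζ - ζ⁻¹ = 2 s I
  have hd : ζ - ζ⁻¹ = 2 * (s : ℂ) * Complex.I := by
    rw [hζdef, zeta_inv_eq m hm, zeta_eq_s15 m hm]
    ring
  have hd0 : ζ - ζ⁻¹ ≠ 0 := by
    rw [hd]
    simp only [ne_eq, mul_eq_zero, Complex.I_ne_zero, or_false]
    push_neg
    exact ⟨two_ne_zero, hsC⟩
  have hconj : (starRingEnd ℂ) ζ = ζ⁻¹ := by
    rw [hζdef, zeta_inv_eq m hm, zeta_eq_s15 m hm]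
    simp only [map_add, map_mul, Complex.conj_ofReal, Complex.conj_I]
    ring
  -- η ∈ K, c := ζ + ζ⁻¹ ∈ K
  have hηK : η ∈ K := IntermediateField.mem_adjoin_simple_self ℚ _
  have hrle : realCyclField n ≤ K := by
    rw [realCyclField, hK, cyclField]
    apply IntermediateField.adjoin_le_iff.mpr
    intro x hx
    simp only [Set.mem_singleton_iff] at hx
    subst hx
    exact add_mem (IntermediateField.mem_adjoin_simple_self ℚ _)
      (inv_mem (IntermediateField.mem_adjoin_simple_self ℚ _))
  have hcK : ζ + ζ⁻¹ ∈ K := by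
    refine hrle (hk ?_)
    exact IntermediateField.mem_adjoin_simple_self ℚ _
  -- the sequences u, v
  set u : ℕ → ℂ := fun j => ζ ^ j + (ζ⁻¹) ^ j with hu
  set v : ℕ → ℂ := fun j => (ζ ^ j - (ζ⁻¹) ^ j) / (ζ - ζ⁻¹) with hv
  have hurec : ∀ j, u (j + 2) = (ζ + ζ⁻¹) * u (j + 1) - u j := fun j =>
    rec_add ζ ζ⁻¹ hζinv j
  have hvrec : ∀ j, v (j + 2) = (ζ + ζ⁻¹) * v (j + 1) - v j := by
    intro j
    simp only [hv]
    rw [rec_sub ζ ζ⁻¹ hζinv j, sub_div, mul_div_assoc]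
  have huv : ∀ j, u j ∈ K ∧ v j ∈ K := by
    have H : ∀ j, (u j ∈ K ∧ v j ∈ K) ∧ (u (j + 1) ∈ K ∧ v (j + 1) ∈ K) := by
      intro j
      induction j with
      | zero =>
        refine ⟨⟨?_, ?_⟩, ?_, ?_⟩
        · show ζ ^ 0 + (ζ⁻¹) ^ 0 ∈ K
          norm_num
        · show (ζ ^ 0 - (ζ⁻¹) ^ 0) / (ζ - ζ⁻¹) ∈ K
          norm_num
        · show ζ ^ (0+1) + (ζ⁻¹) ^ (0+1) ∈ K
          norm_num
          exact hcK
        · show (ζ ^ (0+1) - (ζ⁻¹) ^ (0+1)) / (ζ - ζ⁻¹) ∈ K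
          rw [zero_add, pow_one, pow_one, div_self hd0]
          exact one_mem K
      | succ k ih =>
        refine ⟨ih.2, ?_, ?_⟩
        · rw [hurec k]
          exact sub_mem (mul_mem hcK ih.2.1) ih.1.1
        · rw [hvrec k]
          exact sub_mem (mul_mem hcK ih.2.2) ih.1.2
    exact fun j => (H j).1
  -- the points of the m-gon candidate
  set w : ℕ → ℂ := fun j => u j / 2 + v j * η with hw
  have hwK : ∀ j, w j ∈ K := fun j =>
    add_mem (div_mem (huv j).1 (two_mem' K)) (mul_mem (huv j).2 hηK)
  -- apply (Hom)
  obtain ⟨lam, t, hlam, hΛ⟩ := hhom ((Finset.range m).image w) (by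
    intro z hz
    simp only [Finset.coe_image, Set.mem_image, Finset.mem_coe, Finset.mem_range] at hz
    obtain ⟨j, _, rfl⟩ := hz
    exact hwK j)
  set γ : ℂ := η / (s : ℂ) with hγ
  -- A(ζ^j) = w j
  have hA : ∀ j : ℕ, ((ζ ^ j).re : ℂ) + ((ζ ^ j).im : ℂ) * γ = w j := by
    intro j
    have hconjp : (starRingEnd ℂ) (ζ ^ j) = (ζ⁻¹) ^ j := by rw [map_pow, hconj]
    have h1 : ζ ^ j + (ζ⁻¹) ^ j = 2 * ((ζ ^ j).re : ℂ) := by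
      rw [← hconjp, Complex.add_conj]
      push_cast
      ring
    have h2 : ζ ^ j - (ζ⁻¹) ^ j = 2 * ((ζ ^ j).im : ℂ) * Complex.I := by
      rw [← hconjp, Complex.sub_conj]
      push_cast
      ring
    have e1 : ((ζ ^ j).re : ℂ) = u j / 2 := by
      simp only [hu]
      rw [h1]
      ring
    have e2 : ((ζ ^ j).im : ℂ) = v j * (s : ℂ) := by
      simp only [hv]
      rw [h2, hd]
      field_simp
    rw [e1, e2, hw, hγ]
    simp only []
    field_simp
  have hγim : γ.im ≠ 0 := by
    have hηim : η.im = Real.sin (2 * Real.pi / n) := by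
      rw [hηdef, zeta_eq_s15 n hn]
      simp only [Complex.add_im, Complex.mul_im, Complex.ofReal_im, Complex.ofReal_re,
        Complex.I_im, Complex.I_re, mul_zero, mul_one, zero_add, add_zero, zero_mul, mul_comm]
      ring
    have hsn : 0 < Real.sin (2 * Real.pi / n) := sin_theta_pos n hn
    rw [hγ, div_ofReal_im' η s hs.ne', hηim]
    positivity
  set L := Lmap lam γ with hL
  have hLinj : Function.Injective L := Lmap_injective lam γ hlam.ne' hγim
  refine ⟨fun z => L z + t, ⟨L, t, ⟨hLinj, LinearMap.injective_iff_surjective.mp hLinj⟩,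
    fun z => rfl⟩, ?_⟩
  intro j
  have hmem : w (j : ℕ) ∈ (Finset.range m).image w :=
    Finset.mem_image.mpr ⟨(j : ℕ), Finset.mem_range.mpr j.isLt, rfl⟩
  have hin := hΛ _ hmem
  have hval : L (ζ ^ (j : ℕ)) = (lam : ℂ) * w (j : ℕ) := by
    rw [hL, Lmap_apply, hA (j : ℕ)]
  show L ((zeta m) ^ (j : ℕ)) + t ∈ Λ
  rw [← hζdef, hval]
  exact hin
end

section
/- Let U be a finite set of directions in S¹ with at least 2 elements, let Λ ⊆ ℝ² be a Delone set, and suppose P is a U-polygon in Λ (a non-degenerate convex polygon with vertices in Λ such that every line through a vertex in a direction from U meets another vertex). Partition the vertex set of P into the two alternating sets V and V′ around the boundary. Then card(V) = card(V′), and the sets F = C ∪ V and F′ = C ∪ V′, where C = (Λ ∩ P) \ (V ∪ V′), are distinct finite subsets of Λ with X_u F = X_u F′ for every u ∈ U. -/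
open Complex
open Fin.NatCast
open Fin.CommRing


/-- planar cross product -/
def cr (a b : ℂ) : ℝ := a.re * b.im - a.im * b.re

lemma cr_div_im (u z : ℂ) (hu : u ≠ 0) : cr u z = (z / u).im * Complex.normSq u := by
  have h : Complex.normSq u ≠ 0 := (Complex.normSq_pos.2 hu).ne'
  rw [Complex.div_im]
  field_simp [cr]
  unfold cr; ring

lemma cr_kernel {u z : ℂ} (hu : u ≠ 0) (h : cr u z = 0) : ∃ t : ℝ, z = (t : ℝ) * u := by
  have h2 : (z / u).im = 0 := by
    have hn : Complex.normSq u ≠ 0 := (Complex.normSq_pos.2 hu).ne'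
    have := cr_div_im u z hu
    rw [h] at this
    exact (mul_eq_zero.1 this.symm).resolve_right hn
  refine ⟨(z / u).re, ?_⟩
  have : ((z / u).re : ℂ) = z / u := by
    apply Complex.ext <;> simp [h2]
  rw [this]
  field_simp

lemma lin_rep (f : ℂ →ₗ[ℝ] ℝ) (e : ℂ) (he : e ≠ 0) (hf : f e = 0) (z : ℂ) :
    f z * Complex.normSq e = cr e z * f (Complex.I * e) := by
  have hz : z = ((z / e).re : ℝ) • e + ((z / e).im : ℝ) • (Complex.I * e) := by
    have : ((z / e).re : ℂ) * e + ((z / e).im : ℂ) * (Complex.I * e)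
        = ((z / e).re + (z / e).im * Complex.I) * e := by ring
    rw [Complex.real_smul, Complex.real_smul, this, Complex.re_add_im]
    field_simp
  calc f z * Complex.normSq e
      = ((z / e).re * f e + (z / e).im * f (Complex.I * e)) * Complex.normSq e := by
        nth_rewrite 1 [hz]
        rw [map_add, map_smul, map_smul, smul_eq_mul, smul_eq_mul]
    _ = (z / e).im * Complex.normSq e * f (Complex.I * e) := by rw [hf]; ring
    _ = cr e z * f (Complex.I * e) := by rw [cr_div_im e z he]

lemma cr_bilin1 (a x y : ℂ) (t : ℝ) : cr a (x + (t : ℂ) * y) = cr a x + t * cr a y := by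
  simp [cr, Complex.add_re, Complex.add_im, Complex.mul_re, Complex.mul_im]; ring

lemma cr_sub (a x y : ℂ) : cr a (x - y) = cr a x - cr a y := by
  simp [cr, Complex.sub_re, Complex.sub_im]; ring

lemma cr_swap (a b : ℂ) : cr a b = - cr b a := by simp [cr]; ring

lemma cr_self (a : ℂ) : cr a a = 0 := by simp [cr]; ring

lemma convex_pos {s x y t : ℝ} (hx : 0 < s * x) (hy : 0 < s * y)
    (ht0 : 0 ≤ t) (ht1 : t ≤ 1) : 0 < s * ((1 - t) * x + t * y) := by
  rcases eq_or_lt_of_le ht0 with h | h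
  · rw [← h]; simpa using hx
  · have h1 : 0 < t * (s * y) := mul_pos h hy
    have h2 : 0 ≤ (1 - t) * (s * x) := mul_nonneg (by linarith) hx.le
    nlinarith

/-- Workhorse: two segments crossing the line `{z | cr u z = c}` in the increasing
direction, each lying strictly on the same side `s` of the other's line: impossible. -/
lemma Wprime {u : ℂ} (hu : u ≠ 0) {s : ℝ} {pA qA pB qB : ℂ} {c : ℝ}
    (h1 : cr u pA ≤ c) (h2 : c ≤ cr u qA) (h3 : cr u pA < cr u qA)
    (h4 : cr u pB ≤ c) (h5 : c ≤ cr u qB) (h6 : cr u pB < cr u qB)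
    (sA1 : 0 < s * cr (qA - pA) (pB - pA)) (sA2 : 0 < s * cr (qA - pA) (qB - pA))
    (sB1 : 0 < s * cr (qB - pB) (pA - pB)) (sB2 : 0 < s * cr (qB - pB) (qA - pB)) :
    False := by
  set a1 := cr u pA with ha1
  set a2 := cr u qA with ha2
  set b1 := cr u pB with hb1
  set b2 := cr u qB with hb2
  set tA : ℝ := (c - a1) / (a2 - a1) with htA
  set tB : ℝ := (c - b1) / (b2 - b1) with htB
  have hA0 : (0:ℝ) ≤ tA := div_nonneg (by linarith) (by linarith)
  have hA1 : tA ≤ 1 := by rw [htA, div_le_one (by linarith)]; linarith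
  have hB0 : (0:ℝ) ≤ tB := div_nonneg (by linarith) (by linarith)
  have hB1 : tB ≤ 1 := by rw [htB, div_le_one (by linarith)]; linarith
  set PA : ℂ := pA + (tA : ℂ) * (qA - pA) with hPA
  set PB : ℂ := pB + (tB : ℂ) * (qB - pB) with hPB
  have hcrPA : cr u PA = c := by
    rw [hPA, cr_bilin1, cr_sub, ← ha1, ← ha2, htA, div_mul_cancel₀ _ (by linarith : a2 - a1 ≠ 0)]
    ring
  have hcrPB : cr u PB = c := by
    rw [hPB, cr_bilin1, cr_sub, ← hb1, ← hb2, htB, div_mul_cancel₀ _ (by linarith : b2 - b1 ≠ 0)]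
    ring
  obtain ⟨μ, hμ⟩ : ∃ t : ℝ, PB - PA = (t : ℝ) * u := by
    apply cr_kernel hu
    rw [cr_sub, hcrPA, hcrPB, sub_self]
  -- first inequality: s * μ < 0
  have key1 : s * (μ * cr (qA - pA) u) > 0 := by
    have e1 : PB - pA = ((1 - tB : ℝ) : ℂ) * (pB - pA) + (tB : ℂ) * (qB - pA) := by
      rw [hPB]; push_cast; ring
    have e2 : PB - pA = (μ : ℂ) * u + (tA : ℂ) * (qA - pA) := by
      have : PB - pA = (PB - PA) + (PA - pA) := by ring
      rw [this, hμ, hPA]; ring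
    have c1 : cr (qA - pA) (PB - pA)
        = (1 - tB) * cr (qA - pA) (pB - pA) + tB * cr (qA - pA) (qB - pA) := by
      rw [e1]
      simp [cr, Complex.add_re, Complex.add_im, Complex.mul_re, Complex.mul_im]; ring
    have c2 : cr (qA - pA) (PB - pA) = μ * cr (qA - pA) u := by
      rw [e2]
      have : cr (qA - pA) ((μ : ℂ) * u + (tA : ℂ) * (qA - pA))
          = μ * cr (qA - pA) u + tA * cr (qA - pA) (qA - pA) := by
        simp [cr, Complex.add_re, Complex.add_im, Complex.mul_re, Complex.mul_im]; ring
      rw [this, cr_self]; ring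
    rw [← c2, c1]
    exact convex_pos sA1 sA2 hB0 hB1
  have key2 : s * (μ * cr (qB - pB) u) < 0 := by
    have e1 : PA - pB = ((1 - tA : ℝ) : ℂ) * (pA - pB) + (tA : ℂ) * (qA - pB) := by
      rw [hPA]; push_cast; ring
    have e2 : PA - pB = ((-μ : ℝ) : ℂ) * u + (tB : ℂ) * (qB - pB) := by
      have : PA - pB = -(PB - PA) + (PB - pB) := by ring
      rw [this, hμ, hPB]; push_cast; ring
    have c1 : cr (qB - pB) (PA - pB)
        = (1 - tA) * cr (qB - pB) (pA - pB) + tA * cr (qB - pB) (qA - pB) := by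
      rw [e1]
      simp [cr, Complex.add_re, Complex.add_im, Complex.mul_re, Complex.mul_im]; ring
    have c2 : cr (qB - pB) (PA - pB) = -μ * cr (qB - pB) u := by
      rw [e2]
      have : cr (qB - pB) (((-μ : ℝ) : ℂ) * u + (tB : ℂ) * (qB - pB))
          = (-μ) * cr (qB - pB) u + tB * cr (qB - pB) (qB - pB) := by
        simp [cr, Complex.add_re, Complex.add_im, Complex.mul_re, Complex.mul_im]; ring
      rw [this, cr_self]; ring
    have pos : 0 < s * cr (qB - pB) (PA - pB) := by
      rw [c1]; exact convex_pos sB1 sB2 hA0 hA1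
    rw [c2] at pos; nlinarith [pos]
  have hcu1 : cr (qA - pA) u = -(a2 - a1) := by
    rw [cr_swap, cr_sub, ← ha1, ← ha2]
  have hcu2 : cr (qB - pB) u = -(b2 - b1) := by
    rw [cr_swap, cr_sub, ← hb1, ← hb2]
  rw [hcu1] at key1
  rw [hcu2] at key2
  have hX1 : s * μ < 0 := by nlinarith [key1, h3]
  have hX2 : 0 < s * μ := by nlinarith [key2, h6]
  linarith


lemma ivt_up (P : ℕ → Prop) (a b : ℕ) (hab : a ≤ b) (ha : ¬ P a) (hb : P b) :
    ∃ m, a ≤ m ∧ m < b ∧ ¬ P m ∧ P (m + 1) := by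
  classical
  have hex : ∃ m, a ≤ m ∧ P m := ⟨b, hab, hb⟩
  obtain ⟨hm₁a, hm₁P⟩ := Nat.find_spec hex
  have hm₁b : Nat.find hex ≤ b := Nat.find_le ⟨hab, hb⟩
  have hne : Nat.find hex ≠ a := by intro h; rw [h] at hm₁P; exact ha hm₁P
  have h1 : 1 ≤ Nat.find hex := by omega
  refine ⟨Nat.find hex - 1, by omega, by omega, ?_, by rw [Nat.sub_add_cancel h1]; exact hm₁P⟩
  intro hPm
  exact Nat.find_min hex (by omega) ⟨by omega, hPm⟩

lemma even_invol_aux {α : Type*} [DecidableEq α] (n : ℕ) :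
    ∀ (S : Finset α) (π : α → α), S.card ≤ n → (∀ a ∈ S, π a ∈ S) →
    (∀ a ∈ S, π (π a) = a) → (∀ a ∈ S, π a ≠ a) → Even S.card := by
  induction n with
  | zero => intro S π h _ _ _; interval_cases h : S.card; · simp
  | succ n ih =>
    intro S π hcard hmem hinv hne
    rcases Finset.eq_empty_or_nonempty S with rfl | ⟨a, ha⟩
    · simp
    · have hπa := hmem a ha
      have hπane := hne a ha
      have hsub : ({a, π a} : Finset α) ⊆ S := by
        intro x hx; simp at hx; rcases hx with rfl | rfl; exacts [ha, hπa]
      have hpair : ({a, π a} : Finset α).card = 2 := Finset.card_pair (Ne.symm hπane)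
      have h2 : 2 ≤ S.card := hpair ▸ Finset.card_le_card hsub
      set S' := S \ {a, π a} with hS'
      have hcard' : S'.card = S.card - 2 := by
        rw [hS', Finset.card_sdiff_of_subset hsub, hpair]
      have hmem' : ∀ b ∈ S', π b ∈ S' := by
        intro b hb
        rw [hS', Finset.mem_sdiff] at hb ⊢
        obtain ⟨hbS, hbn⟩ := hb
        simp only [Finset.mem_insert, Finset.mem_singleton] at hbn ⊢
        refine ⟨hmem b hbS, ?_⟩
        push_neg at hbn ⊢
        constructor
        · intro h; apply hbn.2; rw [← hinv b hbS, h]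
        · intro h
          have := hinv b hbS
          rw [h, hinv a ha] at this
          exact hbn.1 this.symm
      have hinv' : ∀ b ∈ S', π (π b) = b := fun b hb => hinv b (Finset.mem_sdiff.1 hb).1
      have hne' : ∀ b ∈ S', π b ≠ b := fun b hb => hne b (Finset.mem_sdiff.1 hb).1
      have hev := ih S' π (by omega) hmem' hinv' hne'
      rw [hcard'] at hev
      obtain ⟨k, hk⟩ := hev
      exact ⟨k + 1, by omega⟩

lemma even_invol {α : Type*} [DecidableEq α] (S : Finset α) (π : α → α)
    (hmem : ∀ a ∈ S, π a ∈ S) (hinv : ∀ a ∈ S, π (π a) = a) (hne : ∀ a ∈ S, π a ≠ a) :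
    Even S.card :=
  even_invol_aux S.card S π le_rfl hmem hinv hne

section Poly
variable {N : ℕ} {v : Fin (N + 3) → ℂ}
  (hedge : ∀ i : Fin (N + 3), ∃ (f : ℂ →ₗ[ℝ] ℝ) (c : ℝ),
      f (v i) = c ∧ f (v (i + 1)) = c ∧
      ∀ j : Fin (N + 3), j ≠ i → j ≠ i + 1 → f (v j) < c)

lemma cast_ne_zero' {t : ℕ} (h1 : 0 < t) (h2 : t < N + 3) : (t : Fin (N+3)) ≠ 0 := by
  intro h
  have := Fin.val_cast_of_lt h2
  rw [h] at this
  simp at this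
  omega

lemma add_nat_ne (a : Fin (N+3)) {t : ℕ} (h1 : 0 < t) (h2 : t < N + 3) :
    a + (t : Fin (N+3)) ≠ a := by
  intro h
  have : (t : Fin (N+3)) = 0 := by
    have := congrArg (fun x => x - a) h
    simpa [add_comm, add_sub_cancel_right] using this
  exact cast_ne_zero' h1 h2 this

lemma one_ne (a : Fin (N+3)) : a + 1 ≠ a := by
  have := add_nat_ne (N := N) a (t := 1) (by omega) (by omega)
  simpa using this

lemma two_ne (a : Fin (N+3)) : a + 2 ≠ a := by
  have := add_nat_ne (N := N) a (t := 2) (by omega) (by omega)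
  simpa using this

include hedge

lemma nbr_ne (k : Fin (N+3)) : v k ≠ v (k + 1) := by
  obtain ⟨f, c, h1, h2, h3⟩ := hedge (k + 1)
  have hk : f (v k) < c := by
    apply h3 k
    · exact fun h => one_ne k h.symm
    · rw [add_assoc]
      intro h
      nth_rewrite 2 [show k = k + 0 by simp] at h
      exact two_ne k (by simpa [one_add_one_eq_two] using h)
  intro h
  rw [h, h1] at hk
  exact lt_irrefl _ hk

lemma vinj : Function.Injective v := by
  intro a b h
  by_contra hab
  obtain ⟨f, c, h1, h2, h3⟩ := hedge a
  by_cases hb : b = a + 1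
  · exact nbr_ne hedge a (by rw [h, hb])
  · have := h3 b (Ne.symm hab) hb
    rw [← h, h1] at this
    exact lt_irrefl _ this

/-- no vertex is a positive combination of two others (homogeneous form) -/
lemma mid {p q m : Fin (N+3)} (hp : p ≠ m) (hq : q ≠ m) (hpq : p ≠ q)
    {α β : ℝ} (hα : 0 < α) (hβ : 0 < β)
    (hcomb : ((α + β : ℝ) : ℂ) * v m = (α : ℂ) * v p + (β : ℂ) * v q) : False := by
  obtain ⟨f, c, h1, h2, h3⟩ := hedge m
  have hfm : (α + β) * f (v m) = α * f (v p) + β * f (v q) := by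
    have h := congrArg f hcomb
    rw [show ((α + β : ℝ) : ℂ) * v m = (α + β) • v m from (Complex.real_smul).symm,
        show (α : ℂ) * v p = α • v p from (Complex.real_smul).symm,
        show (β : ℂ) * v q = β • v q from (Complex.real_smul).symm,
        map_add, map_smul, map_smul, map_smul] at h
    simpa [smul_eq_mul] using h
  have hple : f (v p) ≤ c := by
    by_cases h : p = m + 1
    · rw [h, h2]
    · exact (h3 p hp h).le
  have hqle : f (v q) ≤ c := by
    by_cases h : q = m + 1
    · rw [h, h2]
    · exact (h3 q hq h).le
  have hstrict : f (v p) < c ∨ f (v q) < c := by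
    by_cases h : p = m + 1
    · right
      apply h3 q hq
      rw [h] at hpq
      exact hpq.symm
    · left; exact h3 p hp h
  rw [h1] at hfm
  have hc : α * c + β * c = (α + β) * c := by ring
  rcases hstrict with h | h
  · nlinarith [mul_lt_mul_of_pos_left h hα, mul_le_mul_of_nonneg_left hqle hβ.le]
  · nlinarith [mul_lt_mul_of_pos_left h hβ, mul_le_mul_of_nonneg_left hple hα.le]

lemma btwn (u' : ℂ) {a b c : Fin (N+3)} (hba : b ≠ a) (hbc : b ≠ c) (hac : a ≠ c)
    {t₁ t₂ : ℝ} (hb : v b = v a + (t₁ : ℂ) * u') (hc : v c = v a + (t₂ : ℂ) * u')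
    (h0 : 0 < t₁) (h12 : t₁ < t₂) : False := by
  refine mid hedge (p := a) (q := c) (m := b) hba.symm hbc.symm hac
    (α := t₂ - t₁) (β := t₁) (by linarith) h0 ?_
  push_cast
  linear_combination (t₂ : ℂ) * hb - (t₁ : ℂ) * hc

/-- no three vertices on a common line in direction `u` -/
lemma no3 {u : ℂ} (hu : u ≠ 0) {a b c : Fin (N+3)} (hab : a ≠ b) (hac : a ≠ c)
    (hbc : b ≠ c) (h1 : cr u (v a) = cr u (v b)) (h2 : cr u (v a) = cr u (v c)) :
    False := by
  obtain ⟨t₁, ht₁⟩ := cr_kernel hu (show cr u (v b - v a) = 0 by rw [cr_sub, h1]; ring)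
  obtain ⟨t₂, ht₂⟩ := cr_kernel hu (show cr u (v c - v a) = 0 by rw [cr_sub, h2]; ring)
  have hb : v b = v a + (t₁ : ℂ) * u := by linear_combination ht₁
  have hc : v c = v a + (t₂ : ℂ) * u := by linear_combination ht₂
  have h10 : t₁ ≠ 0 := by
    rintro rfl
    have hba : v b = v a := by rw [hb]; push_cast; ring
    exact hab (vinj hedge hba.symm)
  have h20 : t₂ ≠ 0 := by
    rintro rfl
    have hca : v c = v a := by rw [hc]; push_cast; ring
    exact hac (vinj hedge hca.symm)
  have h12 : t₁ ≠ t₂ := by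
    rintro rfl
    have hbc' : v b = v c := by rw [hb, hc]
    exact hbc (vinj hedge hbc')
  have hb' : v b = v a + ((-t₁ : ℝ) : ℂ) * (-u) := by push_cast; linear_combination hb
  have hc' : v c = v a + ((-t₂ : ℝ) : ℂ) * (-u) := by push_cast; linear_combination hc
  have hab' : v a = v b + ((-t₁ : ℝ) : ℂ) * u := by push_cast; linear_combination -hb
  have hcb : v c = v b + ((t₂ - t₁ : ℝ) : ℂ) * u := by push_cast; linear_combination hc - hb
  have hac' : v a = v c + ((-t₂ : ℝ) : ℂ) * u := by push_cast; linear_combination -hc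
  have hbc' : v b = v c + ((t₁ - t₂ : ℝ) : ℂ) * u := by push_cast; linear_combination hb - hc
  rcases lt_or_gt_of_ne h10 with hn1 | hp1 <;> rcases lt_or_gt_of_ne h20 with hn2 | hp2 <;>
    rcases lt_or_gt_of_ne h12 with hl | hl
  · -- t₁ < 0, t₂ < 0, t₁ < t₂ : middle c, flip u
    exact btwn hedge (-u) (a := a) (b := c) (c := b) hac.symm hbc.symm hab hc' hb'
      (by linarith) (by linarith)
  · -- t₁ < 0, t₂ < 0, t₂ < t₁ : middle b, flip u
    exact btwn hedge (-u) (a := a) (b := b) (c := c) hab.symm hbc hac hb' hc'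
      (by linarith) (by linarith)
  · -- t₁ < 0 < t₂ : middle a, rebase at b
    exact btwn hedge u (a := b) (b := a) (c := c) hab hac hbc hab' hcb
      (by linarith) (by linarith)
  · -- t₁ < 0 < t₂ (t₂ < t₁ impossible)
    linarith
  · -- 0 < t₁, t₂ < 0 : middle a, rebase at c; (t₁ < t₂ impossible)
    linarith
  · -- 0 < t₁, t₂ < 0, t₂ < t₁ : middle a, rebase at c
    exact btwn hedge u (a := c) (b := a) (c := b) hac hab hbc.symm hac' hbc'
      (by linarith) (by linarith)
  · -- 0 < t₁ < t₂ : middle b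
    exact btwn hedge u (a := a) (b := b) (c := c) hab.symm hbc hac hb hc hp1 hl
  · -- 0 < t₂ < t₁ : middle c
    exact btwn hedge u (a := a) (b := c) (c := b) hac.symm hbc.symm hab hc hb hp2 hl

/-- global orientation -/
lemma star : ∃ s : ℝ, (s = 1 ∨ s = -1) ∧ ∀ k j : Fin (N+3), j ≠ k → j ≠ k + 1 →
    0 < s * cr (v (k+1) - v k) (v j - v k) := by
  classical
  have hloc : ∀ k : Fin (N+3), ∃ s : ℝ, (s = 1 ∨ s = -1) ∧ ∀ j : Fin (N+3), j ≠ k → j ≠ k + 1 →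
      0 < s * cr (v (k+1) - v k) (v j - v k) := by
    intro k
    obtain ⟨f, c, h1, h2, h3⟩ := hedge k
    set e := v (k+1) - v k with he
    have hene : e ≠ 0 := sub_ne_zero.2 (Ne.symm (nbr_ne hedge k))
    have hfe : f e = 0 := by rw [he, map_sub, h1, h2, sub_self]
    set κ := f (Complex.I * e) with hκ
    have key : ∀ j : Fin (N+3), j ≠ k → j ≠ k + 1 → cr e (v j - v k) * κ < 0 := by
      intro j hj1 hj2
      have := lin_rep f e hene hfe (v j - v k)
      have hneg : f (v j - v k) < 0 := by
        rw [map_sub, h1]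
        have := h3 j hj1 hj2
        linarith
      nlinarith [Complex.normSq_pos.2 hene, this, hneg]
    refine ⟨if κ < 0 then 1 else -1, by split <;> simp, ?_⟩
    intro j hj1 hj2
    have hk := key j hj1 hj2
    split
    · rename_i h; nlinarith
    · rename_i h
      push_neg at h
      rcases eq_or_lt_of_le h with h' | h'
      · rw [← h'] at hk; simp at hk
      · nlinarith
  choose sf hsf1 hsf2 using hloc
  have tri : ∀ k : Fin (N+3),
      cr (v (k+1) - v k) (v (k+2) - v k) = cr (v (k+2) - v (k+1)) (v k - v (k+1)) := by
    intro k
    simp [cr]; ring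
  have step : ∀ k : Fin (N+3), sf (k+1) = sf k := by
    intro k
    have e1 : 0 < sf k * cr (v (k+1) - v k) (v (k+2) - v k) := by
      apply hsf2 k (k+2) (two_ne k)
      intro h
      exact one_ne (k+1) (by rw [show k+1+1 = k+2 from by ring, h])
    have e2 : 0 < sf (k+1) * cr (v (k+1+1) - v (k+1)) (v k - v (k+1)) := by
      apply hsf2 (k+1) k
      · exact (one_ne k).symm
      · intro h
        exact two_ne k (by rw [← show k+1+1 = k+2 from by ring, ← h])
    have heq : v (k+1+1) = v (k+2) := by norm_num [add_assoc]
    rw [heq, ← tri k] at e2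
    rcases hsf1 k with h | h <;> rcases hsf1 (k+1) with h' | h' <;>
      rw [h, h'] <;> rw [h] at e1 <;> rw [h'] at e2 <;> nlinarith
  have all0 : ∀ m : ℕ, sf ((m : Fin (N+3))) = sf 0 := by
    intro m
    induction m with
    | zero => norm_num
    | succ m ih => rw [show ((m+1 : ℕ) : Fin (N+3)) = (m : Fin (N+3)) + 1 by push_cast; ring,
        step, ih]
  refine ⟨sf 0, hsf1 0, ?_⟩
  intro k j hj1 hj2
  have : sf k = sf 0 := by
    have := all0 k.val
    rwa [Fin.cast_val_eq_self] at this
  rw [← this]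
  exact hsf2 k j hj1 hj2

omit hedge in
lemma omega_inj {i : Fin (N+3)} {m m' : ℕ} (hm : m < N+3) (hm' : m' < N+3)
    (h : i + (m : Fin (N+3)) = i + (m' : Fin (N+3))) : m = m' := by
  have h2 : (m : Fin (N+3)) = (m' : Fin (N+3)) := add_left_cancel h
  have h3 := congrArg Fin.val h2
  rwa [Fin.val_cast_of_lt hm, Fin.val_cast_of_lt hm'] at h3

omit hedge in
lemma omega_succ (i : Fin (N+3)) (m : ℕ) :
    i + ((m+1 : ℕ) : Fin (N+3)) = (i + (m : Fin (N+3))) + 1 := by push_cast; ring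

omit hedge in
lemma cast_wrap {a : ℕ} (h : N+3 ≤ a) :
    ((a : ℕ) : Fin (N+3)) = ((a - (N+3) : ℕ) : Fin (N+3)) := by
  conv_lhs => rw [show a = (a - (N+3)) + (N+3) by omega]
  rw [Nat.cast_add, Fin.natCast_self, add_zero]

omit hedge in
lemma arc_core {s : ℝ}
    (hstar : ∀ k j : Fin (N+3), j ≠ k → j ≠ k + 1 → 0 < s * cr (v (k+1) - v k) (v j - v k))
    {u : ℂ} (hu : u ≠ 0) {c : ℝ} {i : Fin (N+3)} {e : ℕ}
    (he2 : 2 ≤ e) (heN : e ≤ N+1)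
    (hi : cr u (v i) = c)
    (hj : cr u (v (i + ((e : ℕ) : Fin (N+3)))) = c)
    (hnc : ∀ m : ℕ, 0 < m → m < N+3 → m ≠ e → cr u (v (i + ((m : ℕ) : Fin (N+3)))) ≠ c)
    {m₀ : ℕ} (h1m : 1 ≤ m₀) (hm0e : m₀ + 1 < e)
    (hneg : cr u (v (i + ((m₀ : ℕ) : Fin (N+3)))) < c)
    (hpos : c < cr u (v (i + ((m₀ + 1 : ℕ) : Fin (N+3))))) : False := by
  set w : ℕ → ℂ := fun m => v (i + ((m : ℕ) : Fin (N+3))) with hw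
  have hwm : ∀ m : ℕ, w m = v (i + ((m : ℕ) : Fin (N+3))) := fun m => rfl
  have hside : ∀ m mj : ℕ, m + 1 < N+3 → mj < N+3 → mj ≠ m → mj ≠ m + 1 →
      0 < s * cr (w (m+1) - w m) (w mj - w m) := by
    intro m mj hm hmj h1 h2
    have e1 : i + ((m+1 : ℕ) : Fin (N+3)) = (i + (m : Fin (N+3))) + 1 := omega_succ i m
    have hj1 : i + (mj : Fin (N+3)) ≠ i + (m : Fin (N+3)) :=
      fun h => h1 (omega_inj hmj (by omega) h)
    have hj2 : i + (mj : Fin (N+3)) ≠ (i + (m : Fin (N+3))) + 1 := by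
      rw [← e1]; exact fun h => h2 (omega_inj hmj hm h)
    have hh := hstar (i + (m : Fin (N+3))) (i + (mj : Fin (N+3))) hj1 hj2
    rw [hwm, hwm, hwm, e1]
    exact hh
  have hwrap : i + ((N+3 : ℕ) : Fin (N+3)) = i := by rw [Fin.natCast_self, add_zero]
  have hwN : w (N+3) = v i := by rw [hwm, hwrap]
  have hw0 : w 0 = v i := by rw [hwm]; norm_num
  have hsideW : ∀ mj : ℕ, 0 < mj → mj < N+3 → mj ≠ N+2 →
      0 < s * cr (v i - w (N+2)) (w mj - w (N+2)) := by
    intro mj h0 hmj hne2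
    have e1 : i + ((N+3 : ℕ) : Fin (N+3)) = (i + ((N+2 : ℕ) : Fin (N+3))) + 1 :=
      omega_succ i (N+2)
    have hj1 : i + (mj : Fin (N+3)) ≠ i + ((N+2 : ℕ) : Fin (N+3)) :=
      fun h => hne2 (omega_inj hmj (by omega) h)
    have hj2 : i + (mj : Fin (N+3)) ≠ (i + ((N+2 : ℕ) : Fin (N+3))) + 1 := by
      rw [← e1, hwrap]
      intro h
      have h' : i + (mj : Fin (N+3)) = i + ((0 : ℕ) : Fin (N+3)) := by simpa using h
      exact absurd (omega_inj hmj (by omega) h') (by omega)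
    have hh := hstar _ _ hj1 hj2
    rw [← hwN, hwm (N+3), e1, hwm, hwm]
    exact hh
  have hP1 : c < cr u (w (N+2)) := by
    rcases lt_trichotomy (cr u (w (N+2))) c with hlt | heq | hgt
    · exfalso
      refine Wprime hu (pA := w m₀) (qA := w (m₀+1)) (pB := w (N+2)) (qB := v i) (c := c)
        hneg.le hpos.le (lt_trans hneg hpos) hlt.le hi.ge (by rw [hi]; exact hlt)
        (hside m₀ (N+2) (by omega) (by omega) (by omega) (by omega))
        ?_ ?_ ?_
      · have hh := hside m₀ 0 (by omega) (by omega) (by omega) (by omega)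
        rwa [hw0] at hh
      · exact hsideW m₀ (by omega) (by omega) (by omega)
      · exact hsideW (m₀+1) (by omega) (by omega) (by omega)
    · exact absurd heq (hnc (N+2) (by omega) (by omega) (by omega))
    · exact hgt
  have hje : cr u (w e) = c := hj
  have hN1 : cr u (w (e+1)) < c := by
    rcases lt_trichotomy (cr u (w (e+1))) c with hlt | heq | hgt
    · exact hlt
    · exact absurd heq (hnc (e+1) (by omega) (by omega) (by omega))
    · exfalso
      refine Wprime hu (pA := w m₀) (qA := w (m₀+1)) (pB := w e) (qB := w (e+1)) (c := c)
        hneg.le hpos.le (lt_trans hneg hpos) hje.le hgt.le (by rw [hje]; exact hgt)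
        (hside m₀ e (by omega) (by omega) (by omega) (by omega))
        (hside m₀ (e+1) (by omega) (by omega) (by omega) (by omega))
        (hside e m₀ (by omega) (by omega) (by omega) (by omega))
        (hside e (m₀+1) (by omega) (by omega) (by omega) (by omega))
  by_cases hcase : e + 1 = N + 2
  · rw [hcase] at hN1
    exact absurd hP1 (not_lt.2 hN1.le)
  · obtain ⟨m₁, hm₁a, hm₁b, hm₁n, hm₁p⟩ :=
      ivt_up (fun m => c < cr u (w m)) (e+1) (N+2) (by omega) (not_lt.2 hN1.le) hP1
    have hm₁neg : cr u (w m₁) < c := by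
      rcases lt_trichotomy (cr u (w m₁)) c with h | h | h
      · exact h
      · exact absurd h (hnc m₁ (by omega) (by omega) (by omega))
      · exact absurd h hm₁n
    exact Wprime hu (pA := w m₀) (qA := w (m₀+1)) (pB := w m₁) (qB := w (m₁+1)) (c := c)
      hneg.le hpos.le (lt_trans hneg hpos) hm₁neg.le hm₁p.le (lt_trans hm₁neg hm₁p)
      (hside m₀ m₁ (by omega) (by omega) (by omega) (by omega))
      (hside m₀ (m₁+1) (by omega) (by omega) (by omega) (by omega))
      (hside m₁ m₀ (by omega) (by omega) (by omega) (by omega))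
      (hside m₁ (m₀+1) (by omega) (by omega) (by omega) (by omega))

omit hedge in
lemma opp {s : ℝ}
    (hstar : ∀ k j : Fin (N+3), j ≠ k → j ≠ k + 1 → 0 < s * cr (v (k+1) - v k) (v j - v k))
    {u : ℂ} (hu : u ≠ 0) {c : ℝ} {i : Fin (N+3)} {e : ℕ}
    (he2 : 2 ≤ e) (heN : e ≤ N+1)
    (hi : cr u (v i) = c)
    (hj : cr u (v (i + ((e : ℕ) : Fin (N+3)))) = c)
    (hpos : ∀ m : ℕ, 0 < m → m < N+3 → m ≠ e → c < cr u (v (i + ((m : ℕ) : Fin (N+3))))) :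
    False := by
  set w : ℕ → ℂ := fun m => v (i + ((m : ℕ) : Fin (N+3))) with hw
  have hwm : ∀ m : ℕ, w m = v (i + ((m : ℕ) : Fin (N+3))) := fun m => rfl
  have hside : ∀ m mj : ℕ, m + 1 < N+3 → mj < N+3 → mj ≠ m → mj ≠ m + 1 →
      0 < s * cr (w (m+1) - w m) (w mj - w m) := by
    intro m mj hm hmj h1 h2
    have e1 : i + ((m+1 : ℕ) : Fin (N+3)) = (i + (m : Fin (N+3))) + 1 := omega_succ i m
    have hj1 : i + (mj : Fin (N+3)) ≠ i + (m : Fin (N+3)) :=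
      fun h => h1 (omega_inj hmj (by omega) h)
    have hj2 : i + (mj : Fin (N+3)) ≠ (i + (m : Fin (N+3))) + 1 := by
      rw [← e1]; exact fun h => h2 (omega_inj hmj hm h)
    have hh := hstar (i + (m : Fin (N+3))) (i + (mj : Fin (N+3))) hj1 hj2
    rw [hwm, hwm, hwm, e1]
    exact hh
  have hw0 : w 0 = v i := by rw [hwm]; norm_num
  have hje : cr u (w e) = c := hj
  have h1pos : c < cr u (w 1) := hpos 1 (by omega) (by omega) (by omega)
  have hepos : c < cr u (w (e+1)) := hpos (e+1) (by omega) (by omega) (by omega)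
  refine Wprime hu (pA := w 0) (qA := w 1) (pB := w e) (qB := w (e+1)) (c := c)
    ?_ h1pos.le ?_ hje.le hepos.le (by rw [hje]; exact hepos)
    (hside 0 e (by omega) (by omega) (by omega) (by omega))
    (hside 0 (e+1) (by omega) (by omega) (by omega) (by omega))
    (hside e 0 (by omega) (by omega) (by omega) (by omega))
    (hside e 1 (by omega) (by omega) (by omega) (by omega))
  · rw [hw0, hi]
  · rw [hw0, hi]; exact h1pos


omit hedge in
lemma cr_neg_left (u z : ℂ) : cr (-u) z = -(cr u z) := by
  simp only [cr, Complex.neg_re, Complex.neg_im]; ring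

omit hedge in
lemma canon (i k : Fin (N+3)) : ∃ m : ℕ, m < N+3 ∧ k = i + ((m:ℕ) : Fin (N+3)) ∧
    ((k = i) ↔ m = 0) ∧ ∀ e : ℕ, e < N+3 → ((k = i + ((e:ℕ) : Fin (N+3))) ↔ m = e) := by
  refine ⟨((k - i : Fin (N+3)) : ℕ), (k - i : Fin (N+3)).isLt,
    by rw [Fin.cast_val_eq_self]; ring, ?_, ?_⟩
  · constructor
    · rintro rfl; simp
    · intro h
      have h2 : k - i = 0 := Fin.ext (by simp [h])
      exact sub_eq_zero.1 h2
  · intro e he'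
    constructor
    · rintro rfl
      rw [add_sub_cancel_left, Fin.val_cast_of_lt he']
    · intro h
      have h2 : (k - i : Fin (N+3)) = ((e:ℕ) : Fin (N+3)) :=
        Fin.ext (by rw [h, Fin.val_cast_of_lt he'])
      rw [← h2]; ring

omit hedge in
lemma arcs_eq {u : ℂ} {c : ℝ} {i j : Fin (N+3)} {e : ℕ} (he1 : 1 ≤ e) (heN2 : e ≤ N+2)
    (hj' : j = i + ((e:ℕ) : Fin (N+3)))
    (hci : cr u (v i) = c) (hcj : cr u (v j) = c)
    (hAneg : ∀ m : ℕ, 0 < m → m < e → cr u (v (i + ((m:ℕ) : Fin (N+3)))) < c)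
    (hBpos : ∀ m : ℕ, e < m → m < N+3 → c < cr u (v (i + ((m:ℕ) : Fin (N+3))))) :
    (Finset.univ.filter (fun k => cr u (v k) < c)
       = (Finset.Ioo 0 e).image (fun m : ℕ => i + ((m:ℕ) : Fin (N+3)))) ∧
    (Finset.univ.filter (fun k => c < cr u (v k))
       = (Finset.Ioo e (N+3)).image (fun m : ℕ => i + ((m:ℕ) : Fin (N+3)))) := by
  classical
  constructor
  · ext k
    simp only [Finset.mem_filter, Finset.mem_univ, true_and, Finset.mem_image, Finset.mem_Ioo]
    constructor
    · intro hlt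
      obtain ⟨m, hmlt, hkeq, hiff0, hiffe⟩ := canon i k
      refine ⟨m, ⟨?_, ?_⟩, hkeq.symm⟩
      · rcases Nat.eq_zero_or_pos m with h0 | h0
        · exfalso
          have hki := hiff0.mpr h0
          rw [hki, hci] at hlt
          exact lt_irrefl _ hlt
        · exact h0
      · by_contra hge
        push_neg at hge
        rcases eq_or_lt_of_le hge with heq | hgt
        · have hkj : k = j := by rw [hj', heq]; exact hkeq
          rw [hkj, hcj] at hlt
          exact lt_irrefl _ hlt
        · have hp := hBpos m hgt hmlt
          rw [← hkeq] at hp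
          linarith
    · rintro ⟨m, ⟨h0, hlt⟩, rfl⟩
      exact hAneg m h0 hlt
  · ext k
    simp only [Finset.mem_filter, Finset.mem_univ, true_and, Finset.mem_image, Finset.mem_Ioo]
    constructor
    · intro hgt
      obtain ⟨m, hmlt, hkeq, hiff0, hiffe⟩ := canon i k
      refine ⟨m, ⟨?_, hmlt⟩, hkeq.symm⟩
      by_contra hle
      push_neg at hle
      rcases eq_or_lt_of_le hle with heq | hlt2
      · have hkj : k = j := by rw [hj', ← heq]; exact hkeq
        rw [hkj, hcj] at hgt
        exact lt_irrefl _ hgt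
      · rcases Nat.eq_zero_or_pos m with h0 | h0
        · have hki := hiff0.mpr h0
          rw [hki, hci] at hgt
          exact lt_irrefl _ hgt
        · have hp := hAneg m h0 hlt2
          rw [← hkeq] at hp
          linarith
    · rintro ⟨m, ⟨h1, h2⟩, rfl⟩
      exact hBpos m h1 h2

omit hedge in
lemma arcA_const {s : ℝ}
    (hstar : ∀ k j : Fin (N+3), j ≠ k → j ≠ k + 1 → 0 < s * cr (v (k+1) - v k) (v j - v k))
    {u : ℂ} (hu : u ≠ 0) {c : ℝ} {i : Fin (N+3)} {e : ℕ}
    (he2 : 2 ≤ e) (heN : e ≤ N+1)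
    (hci : cr u (v i) = c) (hcj : cr u (v (i + ((e:ℕ) : Fin (N+3)))) = c)
    (hnc : ∀ m : ℕ, 0 < m → m < N+3 → m ≠ e → cr u (v (i + ((m:ℕ) : Fin (N+3)))) ≠ c) :
    (∀ m : ℕ, 0 < m → m < e → cr u (v (i + ((m:ℕ) : Fin (N+3)))) < c) ∨
    (∀ m : ℕ, 0 < m → m < e → c < cr u (v (i + ((m:ℕ) : Fin (N+3))))) := by
  by_contra hcon
  push_neg at hcon
  obtain ⟨⟨m1, h1a, h1b, h1c⟩, ⟨m2, h2a, h2b, h2c⟩⟩ := hcon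
  have hm1 : c < cr u (v (i + ((m1:ℕ) : Fin (N+3)))) :=
    lt_of_le_of_ne h1c (Ne.symm (hnc m1 h1a (by omega) (by omega)))
  have hm2 : cr u (v (i + ((m2:ℕ) : Fin (N+3)))) < c :=
    lt_of_le_of_ne h2c (hnc m2 h2a (by omega) (by omega))
  have hne12 : m1 ≠ m2 := by intro h; rw [h] at hm1; linarith
  rcases lt_or_gt_of_ne hne12 with hlt | hgt
  · obtain ⟨m₀, ha, hb, hc', hd⟩ :=
      ivt_up (fun m => cr u (v (i + ((m:ℕ) : Fin (N+3)))) < c) m1 m2 hlt.le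
        (not_lt.2 hm1.le) hm2
    have hm₀pos : c < cr u (v (i + ((m₀:ℕ) : Fin (N+3)))) :=
      lt_of_le_of_ne (not_lt.1 hc') (Ne.symm (hnc m₀ (by omega) (by omega) (by omega)))
    exact arc_core hstar (neg_ne_zero.2 hu) (c := -c) he2 heN
      (by rw [cr_neg_left, hci]) (by rw [cr_neg_left, hcj])
      (fun m hx hy hz => by
        rw [cr_neg_left]
        exact fun hh => hnc m hx hy hz (neg_inj.mp hh))
      (m₀ := m₀) (by omega) (by omega)
      (by rw [cr_neg_left]; linarith) (by rw [cr_neg_left]; linarith)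
  · obtain ⟨m₀, ha, hb, hc', hd⟩ :=
      ivt_up (fun m => c < cr u (v (i + ((m:ℕ) : Fin (N+3))))) m2 m1 hgt.le
        (not_lt.2 hm2.le) hm1
    have hm₀neg : cr u (v (i + ((m₀:ℕ) : Fin (N+3)))) < c :=
      lt_of_le_of_ne (not_lt.1 hc') (hnc m₀ (by omega) (by omega) (by omega))
    exact arc_core hstar hu he2 heN hci hcj hnc (m₀ := m₀) (by omega) (by omega) hm₀neg hd

omit hedge in
lemma middle_signs {s : ℝ}
    (hstar : ∀ k j : Fin (N+3), j ≠ k → j ≠ k + 1 → 0 < s * cr (v (k+1) - v k) (v j - v k))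
    {u : ℂ} (hu : u ≠ 0) {c : ℝ} {i : Fin (N+3)} {e : ℕ}
    (he2 : 2 ≤ e) (heN : e ≤ N+1)
    (hci : cr u (v i) = c) (hcj : cr u (v (i + ((e:ℕ) : Fin (N+3)))) = c)
    (hnc : ∀ m : ℕ, 0 < m → m < N+3 → m ≠ e → cr u (v (i + ((m:ℕ) : Fin (N+3)))) ≠ c) :
    ((∀ m : ℕ, 0 < m → m < e → cr u (v (i + ((m:ℕ) : Fin (N+3)))) < c) ∧
     (∀ m : ℕ, e < m → m < N+3 → c < cr u (v (i + ((m:ℕ) : Fin (N+3)))))) ∨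
    ((∀ m : ℕ, 0 < m → m < e → c < cr u (v (i + ((m:ℕ) : Fin (N+3))))) ∧
     (∀ m : ℕ, e < m → m < N+3 → cr u (v (i + ((m:ℕ) : Fin (N+3)))) < c)) := by
  have hA := arcA_const hstar hu he2 heN hci hcj hnc
  have hj2 : cr u (v ((i + ((e:ℕ) : Fin (N+3))) + ((N+3-e : ℕ) : Fin (N+3)))) = c := by
    rw [add_assoc, ← Nat.cast_add, show e + (N+3-e) = N+3 by omega, Fin.natCast_self, add_zero]
    exact hci
  have hnc' : ∀ m : ℕ, 0 < m → m < N+3 → m ≠ N+3-e →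
      cr u (v ((i + ((e:ℕ) : Fin (N+3))) + ((m:ℕ) : Fin (N+3)))) ≠ c := by
    intro m h0 hlt hnem
    rw [add_assoc, ← Nat.cast_add]
    by_cases hsum : e + m < N+3
    · exact hnc (e+m) (by omega) hsum (by omega)
    · rw [cast_wrap (by omega : N+3 ≤ e + m)]
      exact hnc (e+m-(N+3)) (by omega) (by omega) (by omega)
  have hB := arcA_const hstar hu (show 2 ≤ N+3-e by omega) (show N+3-e ≤ N+1 by omega)
    hcj hj2 hnc'
  have htrans : ∀ m : ℕ, e < m → m < N+3 →
      v (i + ((m:ℕ) : Fin (N+3)))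
        = v ((i + ((e:ℕ) : Fin (N+3))) + ((m - e : ℕ) : Fin (N+3))) := by
    intro m h1 h2
    rw [add_assoc, ← Nat.cast_add, show e + (m - e) = m by omega]
  have hB' : (∀ m : ℕ, e < m → m < N+3 → cr u (v (i + ((m:ℕ) : Fin (N+3)))) < c) ∨
      (∀ m : ℕ, e < m → m < N+3 → c < cr u (v (i + ((m:ℕ) : Fin (N+3))))) := by
    rcases hB with hB | hB
    · left
      intro m h1 h2
      rw [htrans m h1 h2]
      exact hB (m - e) (by omega) (by omega)
    · right
      intro m h1 h2
      rw [htrans m h1 h2]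
      exact hB (m - e) (by omega) (by omega)
  rcases hA with hA | hA <;> rcases hB' with hBB | hBB
  · exfalso
    apply opp hstar (neg_ne_zero.2 hu) (c := -c) he2 heN
      (by rw [cr_neg_left, hci]) (by rw [cr_neg_left, hcj])
    intro m h0 hlt hnem
    rw [cr_neg_left]
    have hlt2 : cr u (v (i + ((m:ℕ) : Fin (N+3)))) < c := by
      rcases Nat.lt_or_ge m e with h | h
      · exact hA m h0 h
      · exact hBB m (by omega) hlt
    linarith
  · left; exact ⟨hA, hBB⟩
  · right; exact ⟨hA, hBB⟩
  · exfalso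
    apply opp hstar hu he2 heN hci hcj
    intro m h0 hlt hnem
    rcases Nat.lt_or_ge m e with h | h
    · exact hA m h0 h
    · exact hBB m (by omega) hlt

lemma adjacent_side {u : ℂ} (hu : u ≠ 0) {c : ℝ} {a : Fin (N+3)}
    (hca : cr u (v a) = c) (hcb : cr u (v (a+1)) = c) :
    (∀ k : Fin (N+3), k ≠ a → k ≠ a + 1 → cr u (v k) < c) ∨
    (∀ k : Fin (N+3), k ≠ a → k ≠ a + 1 → c < cr u (v k)) := by
  obtain ⟨t, ht⟩ := cr_kernel hu
    (show cr u (v (a+1) - v a) = 0 by rw [cr_sub, hca, hcb, sub_self])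
  have htne : t ≠ 0 := by
    rintro rfl
    push_cast at ht
    have h0 : v (a+1) = v a := by linear_combination ht
    exact nbr_ne hedge a h0.symm
  obtain ⟨f, cf, hf1, hf2, hf3⟩ := hedge a
  have hfu : f u = 0 := by
    have h1 : f (v (a+1) - v a) = 0 := by rw [map_sub, hf1, hf2, sub_self]
    rw [ht, show ((t:ℝ):ℂ) * u = t • u from (Complex.real_smul).symm, map_smul,
      smul_eq_mul] at h1
    exact (mul_eq_zero.1 h1).resolve_left htne
  have hsides : ∀ k : Fin (N+3), k ≠ a → k ≠ a + 1 →
      (cr u (v k) - c) * f (Complex.I * u) < 0 := by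
    intro k h1 h2
    have hlt : f (v k - v a) < 0 := by
      rw [map_sub, hf1]
      linarith [hf3 k h1 h2]
    have hrep := lin_rep f u hu hfu (v k - v a)
    rw [cr_sub, hca] at hrep
    nlinarith [Complex.normSq_pos.2 hu]
  rcases lt_trichotomy (f (Complex.I * u)) 0 with hκ | hκ | hκ
  · right; intro k h1 h2; nlinarith [hsides k h1 h2]
  · exfalso
    have hne2 : a + 2 ≠ a + 1 := by
      intro h
      exact one_ne (a+1) (by rw [show a+1+1 = a+2 from by ring, h])
    have hs := hsides (a+2) (two_ne a) hne2
    rw [hκ] at hs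
    simp at hs
  · left; intro k h1 h2; nlinarith [hsides k h1 h2]


lemma pair_odd {s : ℝ}
    (hstar : ∀ k j : Fin (N+3), j ≠ k → j ≠ k + 1 → 0 < s * cr (v (k+1) - v k) (v j - v k))
    {u : ℂ} (hu : u ≠ 0)
    (hpair : ∀ k : Fin (N+3), ∃ k', k' ≠ k ∧ cr u (v k') = cr u (v k))
    {i j : Fin (N+3)} (hij : i ≠ j) (hcij : cr u (v i) = cr u (v j)) :
    Odd ((j - i : Fin (N+3)) : ℕ) ∧ Even (N+3) := by
  classical
  set e : ℕ := ((j - i : Fin (N+3)) : ℕ) with he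
  set c : ℝ := cr u (v i) with hc
  have hci : cr u (v i) = c := hc.symm
  have hcj : cr u (v j) = c := by rw [← hcij]
  have hj' : j = i + ((e:ℕ) : Fin (N+3)) := by rw [he, Fin.cast_val_eq_self]; ring
  have he1 : 1 ≤ e := by
    rcases Nat.eq_zero_or_pos e with h0 | h0
    · exfalso
      apply hij
      rw [hj', h0]
      norm_num
    · exact h0
  have heN2 : e ≤ N+2 := by
    have := (j - i : Fin (N+3)).isLt
    omega
  have hnc : ∀ m : ℕ, 0 < m → m < N+3 → m ≠ e →
      cr u (v (i + ((m:ℕ) : Fin (N+3)))) ≠ c := by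
    intro m h0 hlt hnem hcm
    have hne_i : i ≠ i + ((m:ℕ) : Fin (N+3)) := by
      intro h
      have h' : i + ((0:ℕ) : Fin (N+3)) = i + ((m:ℕ) : Fin (N+3)) := by
        rw [Nat.cast_zero, add_zero]; exact h
      exact absurd (omega_inj (by omega) hlt h') (by omega)
    have hne_j : j ≠ i + ((m:ℕ) : Fin (N+3)) := by
      rw [hj']
      intro h
      exact hnem (omega_inj (by omega) hlt h).symm
    exact no3 hedge hu hij hne_i hne_j hcij (hci.trans hcm.symm)
  choose π hπne hπlvl using hpair
  have hπinv : ∀ k, π (π k) = k := by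
    intro k
    by_contra hcontra
    exact no3 hedge hu (a := k) (b := π k) (c := π (π k)) (hπne k).symm
      (fun h => hcontra h.symm) (hπne (π k)).symm (hπlvl k).symm
      ((hπlvl (π k)).trans (hπlvl k)).symm
  set Tminus : Finset (Fin (N+3)) := Finset.univ.filter (fun k => cr u (v k) < c) with hTm0
  set Tplus : Finset (Fin (N+3)) := Finset.univ.filter (fun k => c < cr u (v k)) with hTp0
  have hevm : Even Tminus.card := by
    apply even_invol Tminus π ?_ (fun a _ => hπinv a) (fun a _ => hπne a)
    intro k hk
    rw [hTm0, Finset.mem_filter] at hk ⊢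
    exact ⟨Finset.mem_univ _, by rw [hπlvl k]; exact hk.2⟩
  have hevp : Even Tplus.card := by
    apply even_invol Tplus π ?_ (fun a _ => hπinv a) (fun a _ => hπne a)
    intro k hk
    rw [hTp0, Finset.mem_filter] at hk ⊢
    exact ⟨Finset.mem_univ _, by rw [hπlvl k]; exact hk.2⟩
  have hinjA : Set.InjOn (fun m : ℕ => i + ((m:ℕ) : Fin (N+3))) (Finset.Ioo 0 e) := by
    intro x hx y hy hxy
    simp only [Finset.coe_Ioo, Set.mem_Ioo] at hx hy
    exact omega_inj (by omega) (by omega) hxy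
  have hinjB : Set.InjOn (fun m : ℕ => i + ((m:ℕ) : Fin (N+3))) (Finset.Ioo e (N+3)) := by
    intro x hx y hy hxy
    simp only [Finset.coe_Ioo, Set.mem_Ioo] at hx hy
    exact omega_inj (by omega) (by omega) hxy
  have hAcard : ((Finset.Ioo 0 e).image (fun m : ℕ => i + ((m:ℕ) : Fin (N+3)))).card
      = e - 1 := by
    rw [Finset.card_image_of_injOn hinjA, Nat.card_Ioo]
    omega
  have hBcard : ((Finset.Ioo e (N+3)).image (fun m : ℕ => i + ((m:ℕ) : Fin (N+3)))).card
      = N+3-e-1 := by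
    rw [Finset.card_image_of_injOn hinjB, Nat.card_Ioo]
  have hsigns :
      ((∀ m : ℕ, 0 < m → m < e → cr u (v (i + ((m:ℕ) : Fin (N+3)))) < c) ∧
       (∀ m : ℕ, e < m → m < N+3 → c < cr u (v (i + ((m:ℕ) : Fin (N+3)))))) ∨
      ((∀ m : ℕ, 0 < m → m < e → c < cr u (v (i + ((m:ℕ) : Fin (N+3))))) ∧
       (∀ m : ℕ, e < m → m < N+3 → cr u (v (i + ((m:ℕ) : Fin (N+3)))) < c)) := by
    by_cases hcase1 : e = 1
    · have hj1 : j = i + 1 := by rw [hj', hcase1, Nat.cast_one]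
      have hadj := adjacent_side hedge hu hci (by rw [← hj1]; exact hcj)
      have hconv : ∀ m : ℕ, 0 < m → m < N+3 → m ≠ e →
          (i + ((m:ℕ) : Fin (N+3)) ≠ i ∧ i + ((m:ℕ) : Fin (N+3)) ≠ i + 1) := by
        intro m h0 hlt hnem
        constructor
        · intro h
          have h' : i + ((m:ℕ) : Fin (N+3)) = i + ((0:ℕ) : Fin (N+3)) := by
            rw [Nat.cast_zero, add_zero]; exact h
          exact absurd (omega_inj hlt (by omega) h') (by omega)
        · intro h
          rw [← hj1, hj'] at h
          exact hnem (omega_inj hlt (by omega) h)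
      rcases hadj with hadj | hadj
      · right
        refine ⟨fun m h0 hlt => by omega, fun m h1 h2 => ?_⟩
        exact hadj _ (hconv m (by omega) h2 (by omega)).1 (hconv m (by omega) h2 (by omega)).2
      · left
        refine ⟨fun m h0 hlt => by omega, fun m h1 h2 => ?_⟩
        exact hadj _ (hconv m (by omega) h2 (by omega)).1 (hconv m (by omega) h2 (by omega)).2
    · by_cases hcase2 : e = N+2
      · have hcast : ((N+2 : ℕ) : Fin (N+3)) + 1 = 0 := by
          have h1 : ((N+2:ℕ) : Fin (N+3)) + 1 = ((N+3 : ℕ) : Fin (N+3)) := by push_cast; ring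
          rw [h1, Fin.natCast_self]
        have hji1 : j + 1 = i := by
          rw [hj', hcase2, add_assoc, hcast, add_zero]
        have hadj := adjacent_side hedge hu (a := j) hcj (by rw [hji1])
        have hconv : ∀ m : ℕ, 0 < m → m < e →
            (i + ((m:ℕ) : Fin (N+3)) ≠ j ∧ i + ((m:ℕ) : Fin (N+3)) ≠ j + 1) := by
          intro m h0 hlt
          constructor
          · rw [hj']
            intro h
            exact absurd (omega_inj (by omega) (by omega) h) (by omega)
          · rw [hji1]
            intro h
            have h' : i + ((m:ℕ) : Fin (N+3)) = i + ((0:ℕ) : Fin (N+3)) := by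
              rw [Nat.cast_zero, add_zero]; exact h
            exact absurd (omega_inj (by omega) (by omega) h') (by omega)
        rcases hadj with hadj | hadj
        · left
          refine ⟨fun m h0 hlt => ?_, fun m h1 h2 => by omega⟩
          exact hadj _ (hconv m h0 hlt).1 (hconv m h0 hlt).2
        · right
          refine ⟨fun m h0 hlt => ?_, fun m h1 h2 => by omega⟩
          exact hadj _ (hconv m h0 hlt).1 (hconv m h0 hlt).2
      · exact middle_signs hstar hu (by omega) (by omega) hci (by rw [← hj']; exact hcj) hnc
  rcases hsigns with ⟨hA, hB⟩ | ⟨hA, hB⟩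
  · have harcs := arcs_eq (v := v) he1 heN2 hj' hci hcj hA hB
    have hcm2 : Tminus.card = e - 1 := by rw [hTm0, harcs.1, hAcard]
    have hcp2 : Tplus.card = N+3-e-1 := by rw [hTp0, harcs.2, hBcard]
    rw [hcm2] at hevm
    rw [hcp2] at hevp
    obtain ⟨x, hx⟩ := hevm
    obtain ⟨y, hy⟩ := hevp
    exact ⟨⟨x, by omega⟩, ⟨x + y + 1, by omega⟩⟩
  · have harcs := arcs_eq (v := v) (u := -u) (c := -c) he1 heN2 hj'
      (by rw [cr_neg_left, hci]) (by rw [cr_neg_left, hcj])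
      (fun m h0 hlt => by rw [cr_neg_left]; have := hA m h0 hlt; linarith)
      (fun m h1 h2 => by rw [cr_neg_left]; have := hB m h1 h2; linarith)
    have hfeq1 : Finset.univ.filter (fun k => cr (-u) (v k) < -c) = Tplus := by
      rw [hTp0]
      ext k
      simp only [Finset.mem_filter, Finset.mem_univ, true_and, cr_neg_left]
      constructor <;> intro <;> linarith
    have hfeq2 : Finset.univ.filter (fun k => -c < cr (-u) (v k)) = Tminus := by
      rw [hTm0]
      ext k
      simp only [Finset.mem_filter, Finset.mem_univ, true_and, cr_neg_left]
      constructor <;> intro <;> linarith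
    have hcp2 : Tplus.card = e - 1 := by rw [← hfeq1, harcs.1, hAcard]
    have hcm2 : Tminus.card = N+3-e-1 := by rw [← hfeq2, harcs.2, hBcard]
    rw [hcm2] at hevm
    rw [hcp2] at hevp
    obtain ⟨x, hx⟩ := hevp
    obtain ⟨y, hy⟩ := hevm
    exact ⟨⟨x, by omega⟩, ⟨x + y + 1, by omega⟩⟩

omit hedge in
lemma pair_mod2 {i j : Fin (N+3)} (hodd : Odd ((j - i : Fin (N+3)) : ℕ))
    (heven : Even (N+3)) : (i : ℕ) % 2 ≠ (j : ℕ) % 2 := by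
  have hj' : j = i + (j - i) := by ring
  have hval : (j : ℕ) = ((i : ℕ) + ((j - i : Fin (N+3)) : ℕ)) % (N+3) := by
    conv_lhs => rw [hj']
    rw [Fin.val_add]
  obtain ⟨a, ha⟩ := hodd
  obtain ⟨b, hb⟩ := heven
  have h2 : (2 : ℕ) ∣ N+3 := ⟨b, by omega⟩
  have : (j : ℕ) % 2 = ((i : ℕ) + ((j - i : Fin (N+3)) : ℕ)) % 2 := by
    rw [hval, Nat.mod_mod_of_dvd _ h2]
  rw [this, ha]
  omega

end Poly

lemma discrete_finite {Λ : Set ℂ} {r : ℝ} (hr : 0 < r)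
    (hdisc : ∀ x : ℂ, (Λ ∩ Metric.ball x r).Subsingleton) {K : Set ℂ} (hK : IsCompact K) :
    (Λ ∩ K).Finite := by
  obtain ⟨t, htfin, hcover⟩ := (Metric.totallyBounded_iff.1 hK.totallyBounded) r hr
  apply Set.Finite.subset (Set.Finite.biUnion htfin
    (fun y _ => ((hdisc y).finite : (Λ ∩ Metric.ball y r).Finite)))
  intro z hz
  have hzK := hcover hz.2
  simp only [Set.mem_iUnion] at hzK ⊢
  obtain ⟨y, hy, hb⟩ := hzK
  exact ⟨y, hy, hz.1, hb⟩



/-- Let `U ⊆ S¹` be a finite set of directions with at least two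
elements, let `Λ ⊆ ℂ ≅ ℝ²` be a Delone set (uniformly discrete and relatively dense),
and let `P` be a `U`-polygon in `Λ`, given by its vertices `v 0, v 1, …` (at least
three of them) listed in order around the boundary (each consecutive pair spans an
edge, i.e. lies on a supporting line with all remaining vertices strictly on one side),
all lying in `Λ`, such that for every vertex and every `u ∈ U` the line through that
vertex in direction `u` passes through another vertex. Let `V` and `V'` be the two
alternating vertex classes around the boundary, `C = (Λ ∩ P) \ (V ∪ V')`, `F = C ∪ V`
and `F' = C ∪ V'`. Then `card V = card V'`, and `F`, `F'` are distinct finite subsets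
of `Λ` with the same X-rays in all directions of `U` (for every `u ∈ U`, every line in
direction `u` meets `F` and `F'` in the same number of points). -/
theorem uPolygon_xray (U : Finset ℂ) (hU : 2 ≤ U.card)
    (hUdir : ∀ u ∈ U, ‖u‖ = 1)
    (Λ : Set ℂ)
    -- Λ is uniformly discrete:
    (r : ℝ) (hr : 0 < r) (hdisc : ∀ x : ℂ, (Λ ∩ Metric.ball x r).Subsingleton)
    -- Λ is relatively dense:
    (R : ℝ) (hR : 0 < R) (hdense : ∀ x : ℂ, (Λ ∩ Metric.ball x R).Nonempty)
    -- the vertices of the non-degenerate convex polygon P, in cyclic boundary order: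
    (N : ℕ) (v : Fin (N + 3) → ℂ)
    (hvΛ : ∀ i, v i ∈ Λ)
    (hedge : ∀ i : Fin (N + 3), ∃ (f : ℂ →ₗ[ℝ] ℝ) (c : ℝ),
      f (v i) = c ∧ f (v (i + 1)) = c ∧
      ∀ j : Fin (N + 3), j ≠ i → j ≠ i + 1 → f (v j) < c)
    -- P is a U-polygon:
    (hUpoly : ∀ i : Fin (N + 3), ∀ u ∈ U,
      ∃ j : Fin (N + 3), j ≠ i ∧ ∃ t : ℝ, v j = v i + (t : ℂ) * u) :
    -- the polygon and the alternating vertex classes: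
    ∀ P V V' C F F' : Set ℂ,
      P = convexHull ℝ (Set.range v) →
      V = v '' {i : Fin (N + 3) | (i : ℕ) % 2 = 0} →
      V' = v '' {i : Fin (N + 3) | (i : ℕ) % 2 = 1} →
      C = (Λ ∩ P) \ (V ∪ V') →
      F = C ∪ V →
      F' = C ∪ V' →
      V.ncard = V'.ncard ∧
      F ≠ F' ∧ F.Finite ∧ F'.Finite ∧ F ⊆ Λ ∧ F' ⊆ Λ ∧
      ∀ u ∈ U, ∀ x : ℂ,
        {z ∈ F | ∃ t : ℝ, z = x + (t : ℂ) * u}.ncard =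
        {z ∈ F' | ∃ t : ℝ, z = x + (t : ℂ) * u}.ncard := by
  intro P V V' C F F' hP hV hV' hC hF hF'
  classical
  have hvinj := vinj hedge
  obtain ⟨s, hs, hstar⟩ := star hedge
  have hune : ∀ u ∈ U, u ≠ 0 := by
    intro u hu h0
    have := hUdir u hu
    rw [h0] at this
    simp at this
  have hpairU : ∀ u ∈ U, ∀ k : Fin (N+3), ∃ k', k' ≠ k ∧ cr u (v k') = cr u (v k) := by
    intro u hu k
    obtain ⟨j, hjk, t, ht⟩ := hUpoly k u hu
    refine ⟨j, hjk, ?_⟩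
    rw [ht, cr_bilin1, cr_self, mul_zero, add_zero]
  -- Even (N+3)
  have hUne : U.Nonempty := Finset.card_pos.1 (by omega)
  obtain ⟨u₀, hu₀⟩ := hUne
  have heven : Even (N+3) := by
    obtain ⟨j, hjk, t, ht⟩ := hUpoly 0 u₀ hu₀
    have hcr : cr u₀ (v 0) = cr u₀ (v j) := by
      rw [ht, cr_bilin1, cr_self, mul_zero, add_zero]
    exact (pair_odd hedge hstar (hune u₀ hu₀) (hpairU u₀ hu₀) (Ne.symm hjk) hcr).2
  -- parity of paired vertices
  have hparity : ∀ u ∈ U, ∀ a b : Fin (N+3), a ≠ b → cr u (v a) = cr u (v b) →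
      ((a : ℕ) % 2 ≠ (b : ℕ) % 2) := by
    intro u hu a b hab hcr
    have h := pair_odd hedge hstar (hune u hu) (hpairU u hu) hab hcr
    exact pair_mod2 h.1 h.2
  -- the index parity classes
  set Ev : Set (Fin (N+3)) := {k : Fin (N+3) | (k : ℕ) % 2 = 0} with hEv
  set Od : Set (Fin (N+3)) := {k : Fin (N+3) | (k : ℕ) % 2 = 1} with hOd
  have hOdEq : Od = (fun k => k + 1) '' Ev := by
    ext k
    simp only [hOd, hEv, Set.mem_image, Set.mem_setOf_eq]
    constructor
    · intro hk
      refine ⟨k - 1, ?_, by ring⟩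
      have hk0 : k ≠ 0 := by
        intro h
        rw [h] at hk
        simp at hk
      rw [Fin.coe_sub_one, if_neg hk0]
      omega
    · rintro ⟨e', he', rfl⟩
      have h1 : ((e' + 1 : Fin (N+3)) : ℕ) = ((e' : ℕ) + 1) % (N+3) := by
        rw [Fin.val_add, Fin.val_one]
      obtain ⟨b, hb⟩ := heven
      rcases Nat.lt_or_ge ((e' : ℕ) + 1) (N+3) with h | h
      · rw [h1, Nat.mod_eq_of_lt h]
        omega
      · exfalso
        have := e'.isLt
        omega
  have hEvOd : Ev.ncard = Od.ncard := by
    rw [hOdEq, Set.ncard_image_of_injective Ev (add_left_injective 1)]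
  have hcardVV : V.ncard = V'.ncard := by
    rw [hV, hV', Set.ncard_image_of_injective _ hvinj, Set.ncard_image_of_injective _ hvinj]
    exact hEvOd
  -- finiteness
  have hPcomp : IsCompact P := by
    rw [hP]
    exact (Set.finite_range v).isCompact_convexHull ℝ
  have hfinP : (Λ ∩ P).Finite := discrete_finite hr hdisc hPcomp
  have hvP : ∀ k, v k ∈ P := by
    intro k
    rw [hP]
    exact subset_convexHull ℝ _ ⟨k, rfl⟩
  have hVsub : V ⊆ Λ ∩ P := by
    rw [hV]
    rintro z ⟨k, _, rfl⟩
    exact ⟨hvΛ k, hvP k⟩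
  have hV'sub : V' ⊆ Λ ∩ P := by
    rw [hV']
    rintro z ⟨k, _, rfl⟩
    exact ⟨hvΛ k, hvP k⟩
  have hCsub : C ⊆ Λ ∩ P := by rw [hC]; exact Set.diff_subset
  have hFsub : F ⊆ Λ ∩ P := by rw [hF]; exact Set.union_subset hCsub hVsub
  have hF'sub : F' ⊆ Λ ∩ P := by rw [hF']; exact Set.union_subset hCsub hV'sub
  have hFfin : F.Finite := hfinP.subset hFsub
  have hF'fin : F'.Finite := hfinP.subset hF'sub
  -- F ≠ F'
  have hv0V : v 0 ∈ V := by
    rw [hV]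
    exact ⟨0, by simp [hEv], rfl⟩
  have hv0F : v 0 ∈ F := by rw [hF]; exact Or.inr hv0V
  have hv0nV' : v 0 ∉ V' := by
    rw [hV']
    rintro ⟨k, hk, hkeq⟩
    have := hvinj hkeq
    rw [this] at hk
    simp [hOd] at hk
  have hv0nC : v 0 ∉ C := by
    rw [hC]
    rintro ⟨_, hn⟩
    exact hn (Or.inl hv0V)
  have hFne : F ≠ F' := by
    intro h
    rw [h, hF'] at hv0F
    rcases hv0F with h' | h'
    exacts [hv0nC h', hv0nV' h']
  refine ⟨hcardVV, hFne, hFfin, hF'fin,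
    fun z hz => (hFsub hz).1, fun z hz => (hF'sub hz).1, ?_⟩
  -- X-rays
  intro u hu x
  have hu0 := hune u hu
  set L : Set ℂ := {z : ℂ | ∃ t : ℝ, z = x + (t : ℂ) * u} with hL
  have hLiff : ∀ z : ℂ, z ∈ L ↔ cr u z = cr u x := by
    intro z
    constructor
    · rintro ⟨t, rfl⟩
      rw [cr_bilin1, cr_self, mul_zero, add_zero]
    · intro h
      obtain ⟨t, ht⟩ := cr_kernel hu0 (show cr u (z - x) = 0 by rw [cr_sub, h, sub_self])
      exact ⟨t, by linear_combination ht⟩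
  have hsepF : {z ∈ F | ∃ t : ℝ, z = x + (t : ℂ) * u} = F ∩ L := rfl
  have hsepF' : {z ∈ F' | ∃ t : ℝ, z = x + (t : ℂ) * u} = F' ∩ L := rfl
  rw [hsepF, hsepF', hF, hF', Set.union_inter_distrib_right, Set.union_inter_distrib_right]
  have hdisjV : Disjoint (C ∩ L) (V ∩ L) := by
    apply Set.disjoint_of_subset Set.inter_subset_left Set.inter_subset_left
    rw [hC]
    exact Set.disjoint_sdiff_left.mono_right Set.subset_union_left
  have hdisjV' : Disjoint (C ∩ L) (V' ∩ L) := by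
    apply Set.disjoint_of_subset Set.inter_subset_left Set.inter_subset_left
    rw [hC]
    exact Set.disjoint_sdiff_left.mono_right Set.subset_union_right
  have hCLfin : (C ∩ L).Finite := hfinP.subset (Set.inter_subset_left.trans hCsub)
  have hVLfin : (V ∩ L).Finite := hfinP.subset (Set.inter_subset_left.trans hVsub)
  have hV'Lfin : (V' ∩ L).Finite := hfinP.subset (Set.inter_subset_left.trans hV'sub)
  rw [Set.ncard_union_eq hdisjV hCLfin hVLfin, Set.ncard_union_eq hdisjV' hCLfin hV'Lfin]
  suffices h : (V ∩ L).ncard = (V' ∩ L).ncard by omega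
  have hLpre : v ⁻¹' L = {k : Fin (N+3) | cr u (v k) = cr u x} := by
    ext k
    simp only [Set.mem_preimage, Set.mem_setOf_eq]
    exact hLiff (v k)
  have hVL : V ∩ L = v '' (Ev ∩ {k : Fin (N+3) | cr u (v k) = cr u x}) := by
    rw [hV, ← Set.image_inter_preimage, hLpre]
  have hV'L : V' ∩ L = v '' (Od ∩ {k : Fin (N+3) | cr u (v k) = cr u x}) := by
    rw [hV', ← Set.image_inter_preimage, hLpre]
  rw [hVL, hV'L, Set.ncard_image_of_injective _ hvinj, Set.ncard_image_of_injective _ hvinj]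
  set J : Set (Fin (N+3)) := {k : Fin (N+3) | cr u (v k) = cr u x} with hJ
  rcases Set.eq_empty_or_nonempty J with hJe | ⟨k₀, hk₀⟩
  · rw [hJe]
    simp
  · obtain ⟨k₁, hk₁ne, hk₁lvl⟩ := hpairU u hu k₀
    have hk₀' : cr u (v k₀) = cr u x := hk₀
    have hk₁J : k₁ ∈ J := by
      simp only [hJ, Set.mem_setOf_eq]
      rw [hk₁lvl]
      exact hk₀'
    have hJeq : J = {k₀, k₁} := by
      ext k
      simp only [hJ, Set.mem_setOf_eq, Set.mem_insert_iff, Set.mem_singleton_iff]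
      constructor
      · intro hk
        by_contra hcon
        push_neg at hcon
        exact no3 hedge hu0 (a := k₀) (b := k₁) (c := k) (Ne.symm hk₁ne)
          (Ne.symm hcon.1) (Ne.symm hcon.2) hk₁lvl.symm (hk₀'.trans hk.symm)
      · rintro (rfl | rfl)
        · exact hk₀'
        · exact hk₁J
    have hpar := hparity u hu k₀ k₁ (Ne.symm hk₁ne) hk₁lvl.symm
    rw [hJeq]
    rcases Nat.mod_two_eq_zero_or_one (k₀ : ℕ) with h0 | h0
    · have h1 : (k₁ : ℕ) % 2 = 1 := by omega
      have hEvJ : Ev ∩ ({k₀, k₁} : Set (Fin (N+3))) = {k₀} := by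
        ext k
        simp only [hEv, Set.mem_inter_iff, Set.mem_setOf_eq, Set.mem_insert_iff,
          Set.mem_singleton_iff]
        constructor
        · rintro ⟨hke, rfl | rfl⟩
          · rfl
          · exact absurd hke (by omega)
        · rintro rfl
          exact ⟨h0, Or.inl rfl⟩
      have hOdJ : Od ∩ ({k₀, k₁} : Set (Fin (N+3))) = {k₁} := by
        ext k
        simp only [hOd, Set.mem_inter_iff, Set.mem_setOf_eq, Set.mem_insert_iff,
          Set.mem_singleton_iff]
        constructor
        · rintro ⟨hke, rfl | rfl⟩
          · exact absurd hke (by omega)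
          · rfl
        · rintro rfl
          exact ⟨h1, Or.inr rfl⟩
      rw [hEvJ, hOdJ, Set.ncard_singleton, Set.ncard_singleton]
    · have h1 : (k₁ : ℕ) % 2 = 0 := by omega
      have hEvJ : Ev ∩ ({k₀, k₁} : Set (Fin (N+3))) = {k₁} := by
        ext k
        simp only [hEv, Set.mem_inter_iff, Set.mem_setOf_eq, Set.mem_insert_iff,
          Set.mem_singleton_iff]
        constructor
        · rintro ⟨hke, rfl | rfl⟩
          · exact absurd hke (by omega)
          · rfl
        · rintro rfl
          exact ⟨h1, Or.inr rfl⟩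
      have hOdJ : Od ∩ ({k₀, k₁} : Set (Fin (N+3))) = {k₀} := by
        ext k
        simp only [hOd, Set.mem_inter_iff, Set.mem_setOf_eq, Set.mem_insert_iff,
          Set.mem_singleton_iff]
        constructor
        · rintro ⟨hke, rfl | rfl⟩
          · rfl
          · exact absurd hke (by omega)
        · rintro rfl
          exact ⟨h0, Or.inl rfl⟩
      rw [hEvJ, hOdJ, Set.ncard_singleton, Set.ncard_singleton]
end
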